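/- arXiv:1110.6424 — 3 statements merged into one kernel-verified Lean document; each statement's English description precedes it below -/
import Mathlib

section
/- Let w ∈ W̃_{D_m} and 0 ≤ k ≤ m. Then w satisfies (SP1') and (SP2') at k if and only if ν_k^w ∈ Conv(S_{2m}^∘·μ). -/
open Finset

namespace TypeD

abbrev VecZ (m : ℕ) := Fin (2 * m) → ℤ
abbrev VecR (m : ℕ) := Fin (2 * m) → ℝ

/-- `σ ∈ S_{2m}^∘`: even, and commuting with `j ↦ j*`. -/
def InSO (m : ℕ) (σ : Equiv.Perm (Fin (2 * m))) : Prop :=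
  Equiv.Perm.sign σ = 1 ∧ ∀ j, σ j.rev = (σ j).rev

/-- `t ∈ X_{*D_m}`. -/
def InXD (m : ℕ) (t : VecZ m) : Prop :=
  ∀ j j' : Fin (2 * m), t j + t j.rev = t j' + t j'.rev

/-- `ω_i ∈ ℤ^{2m}`: writing `i = 2m·b + c` with `0 ≤ c < 2m`, the first `c` entries
are `-b-1` and the rest are `-b`. -/
def omegaD (m : ℕ) (i : ℤ) (j : Fin (2 * m)) : ℤ :=
  if ((j : ℕ) : ℤ) < i % (2 * (m : ℤ)) then -(i / (2 * (m : ℤ))) - 1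
  else -(i / (2 * (m : ℤ)))

/-- `μ_k^w = w·ω_k − ω_k` for `w = t_t σ`. -/
def muD (m : ℕ) (t : VecZ m) (σ : Equiv.Perm (Fin (2 * m))) (k : ℤ) (j : Fin (2 * m)) : ℤ :=
  t j + omegaD m k (σ⁻¹ j) - omegaD m k j

/-- `ν_k^w = (μ_k^w + μ_{−k}^w)/2`, real-valued. -/
noncomputable def nuD (m : ℕ) (t : VecZ m) (σ : Equiv.Perm (Fin (2 * m))) (k : ℤ) (j : Fin (2 * m)) : ℝ :=
  ((muD m t σ k j + muD m t σ (-k) j : ℤ) : ℝ) / 2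

/-- `c_k^w = #{j : μ_k^w(j) = 2}`. -/
noncomputable def cD (m : ℕ) (t : VecZ m) (σ : Equiv.Perm (Fin (2 * m))) (k : ℤ) : ℕ :=
  Set.ncard {j : Fin (2 * m) | muD m t σ k j = 2}

/-- the cocharacter `μ = (2^{(q)}, 1^{(2m−2q)}, 0^{(q)})`. -/
def muQ (m q : ℕ) (j : Fin (2 * m)) : ℤ :=
  if (j : ℕ) < q then 2 else if (j : ℕ) < 2 * m - q then 1 else 0

/-- the coroot lattice `Q∨_{D_m}`. -/
def QveeD (m : ℕ) : Set (VecZ m) :=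
  {x | (∀ j, x j + x j.rev = 0) ∧
    Even (∑ j ∈ Finset.univ.filter (fun j : Fin (2 * m) => (j : ℕ) < m), x j)}

/-- `j ∈ A_a` (1-indexed `{1,…,a} ∪ {2m+1−a,…,2m}`). -/
def memA (m a : ℕ) (j : Fin (2 * m)) : Prop := (j : ℕ) < a ∨ 2 * m - a ≤ (j : ℕ)

/-- `j ∈ B_a` (1-indexed `{a+1,…,2m−a}`). -/
def memB (m a : ℕ) (j : Fin (2 * m)) : Prop := a ≤ (j : ℕ) ∧ (j : ℕ) < 2 * m - a

def IsIntVal (x : ℝ) : Prop := ∃ z : ℤ, x = (z : ℝ)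

/-- a half-integer: an element of `(1/2)ℤ ∖ ℤ`. -/
def IsHalfInt (x : ℝ) : Prop := (∃ z : ℤ, x = (z : ℝ) / 2) ∧ ¬ IsIntVal x

/-- `μ_k^w` is self-dual, i.e. `μ_k^w = μ_{−k}^w`. -/
def SelfDual (m : ℕ) (t : VecZ m) (σ : Equiv.Perm (Fin (2 * m))) (k : ℤ) : Prop :=
  ∀ j, muD m t σ k j = muD m t σ (-k) j

/-- (SP1) at `k`. -/
def SP1 (m : ℕ) (t : VecZ m) (σ : Equiv.Perm (Fin (2 * m))) (k : ℤ) : Prop :=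
  (∀ j, muD m t σ k j + muD m t σ (-k) j.rev = 2) ∧
  (∀ j, 0 ≤ muD m t σ k j ∧ muD m t σ k j ≤ 2)

/-- (SP2) at `k`. -/
def SP2 (m q : ℕ) (t : VecZ m) (σ : Equiv.Perm (Fin (2 * m))) (k : ℤ) : Prop :=
  cD m t σ k ≤ q

/-- (SP3) at `k`. -/
def SP3 (m q : ℕ) (t : VecZ m) (σ : Equiv.Perm (Fin (2 * m))) (k : ℕ) : Prop :=
  (SelfDual m t σ (k : ℤ) ∧ (fun j => muD m t σ (k : ℤ) j - muQ m q j) ∉ QveeD m) →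
    ∃ j₁ j₂ : Fin (2 * m), memA m k j₁ ∧ memB m k j₂ ∧
      muD m t σ (k : ℤ) j₁ = 1 ∧ muD m t σ (k : ℤ) j₂ = 1

/-- (SP1') at `k`. -/
def SP1' (m : ℕ) (t : VecZ m) (σ : Equiv.Perm (Fin (2 * m))) (k : ℤ) : Prop :=
  (∀ j, nuD m t σ k j + nuD m t σ k j.rev = 2) ∧
  (∀ j, 0 ≤ nuD m t σ k j ∧ nuD m t σ k j ≤ 2)

/-- (SP2') at `k`. -/
def SP2' (m q : ℕ) (t : VecZ m) (σ : Equiv.Perm (Fin (2 * m))) (k : ℤ) : Prop :=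
  (Set.ncard {j : Fin (2 * m) | nuD m t σ k j = 2} : ℝ) +
    (Set.ncard {j : Fin (2 * m) | ¬ IsIntVal (nuD m t σ k j)} : ℝ) / 4 ≤ (q : ℝ)

/-- `ν_k^w − μ ∈ Q∨_{D_m}`. -/
def NuCongQvee (m q : ℕ) (t : VecZ m) (σ : Equiv.Perm (Fin (2 * m))) (k : ℤ) : Prop :=
  ∃ y ∈ QveeD m, ∀ j, nuD m t σ k j = ((muQ m q j + y j : ℤ) : ℝ)

/-- (SP3') at `k`. -/
def SP3' (m q : ℕ) (t : VecZ m) (σ : Equiv.Perm (Fin (2 * m))) (k : ℕ) : Prop :=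
  ((∀ j, IsIntVal (nuD m t σ (k : ℤ) j)) ∧ ¬ NuCongQvee m q t σ (k : ℤ)) →
    ∃ j₁ j₂ : Fin (2 * m), memA m k j₁ ∧ memB m k j₂ ∧
      nuD m t σ (k : ℤ) j₁ = 1 ∧ nuD m t σ (k : ℤ) j₂ = 1

/-- the orbit `S_{2m}^∘ · μ` inside `ℝ^{2m}`. -/
def OrbitMu (m q : ℕ) : Set (VecR m) :=
  {x | ∃ σ : Equiv.Perm (Fin (2 * m)), InSO m σ ∧ ∀ j, x j = ((muQ m q (σ⁻¹ j) : ℤ) : ℝ)}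

/-- `Conv(S_{2m}^∘ · μ)`. -/
def ConvMu (m q : ℕ) : Set (VecR m) := convexHull ℝ (OrbitMu m q)

/-- the affine action of `w = t_t σ` on `ℝ^{2m}`. -/
noncomputable def actR (m : ℕ) (t : VecZ m) (σ : Equiv.Perm (Fin (2 * m))) (x : VecR m) (j : Fin (2 * m)) : ℝ :=
  (t j : ℝ) + x (σ⁻¹ j)

/-- the point `a_k = ((−1/2)^{(k)}, 0^{(2m−2k)}, (1/2)^{(k)})`. -/
noncomputable def aD (m k : ℕ) (j : Fin (2 * m)) : ℝ :=
  if (j : ℕ) < k then -(1 / 2) else if (j : ℕ) < 2 * m - k then 0 else 1 / 2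

/-- the point `a_{0'} = (−1, 0^{(2m−2)}, 1)`. -/
noncomputable def a0' (m : ℕ) (j : Fin (2 * m)) : ℝ :=
  if (j : ℕ) = 0 then -1 else if (j : ℕ) = 2 * m - 1 then 1 else 0

/-- the point `a_{m'} = ((−1/2)^{(m−1)}, 1/2, −1/2, (1/2)^{(m−1)})`. -/
noncomputable def am' (m : ℕ) (j : Fin (2 * m)) : ℝ :=
  if (j : ℕ) < m - 1 then -(1 / 2)
  else if (j : ℕ) = m - 1 then 1 / 2
  else if (j : ℕ) = m then -(1 / 2)
  else 1 / 2

/-- `ν_{0'}^w = w·a_{0'} − a_{0'}`. -/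
noncomputable def nu0' (m : ℕ) (t : VecZ m) (σ : Equiv.Perm (Fin (2 * m))) (j : Fin (2 * m)) : ℝ :=
  actR m t σ (a0' m) j - a0' m j

/-- `ν_{m'}^w = w·a_{m'} − a_{m'}`. -/
noncomputable def num' (m : ℕ) (t : VecZ m) (σ : Equiv.Perm (Fin (2 * m))) (j : Fin (2 * m)) : ℝ :=
  actR m t σ (am' m) j - am' m j

/-- membership in the real apartment `{x : x(1)+x(2m) = ⋯ = x(m)+x(m+1)}`. -/
def InApartR (m : ℕ) (x : VecR m) : Prop :=
  ∀ j j' : Fin (2 * m), x j + x j.rev = x j' + x j'.rev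

/-- membership in the base alcove `A_{D_m}`. -/
def InAlcove (m : ℕ) (x : VecR m) : Prop :=
  InApartR m x ∧
  (∀ j0 jt : Fin (2 * m), (j0 : ℕ) = 0 → 1 ≤ (jt : ℕ) → (jt : ℕ) ≤ m →
    x j0 < x jt ∧ x j0.rev - 1 < x jt) ∧
  (∀ j j' : Fin (2 * m), 1 ≤ (j : ℕ) → (j : ℕ) ≤ m - 2 → (j : ℕ) < (j' : ℕ) →
    (j' : ℕ) ≤ m → x j < x j')

/-- `w = t_t σ` is μ-permissible: `w ≡ t_μ mod W_{aff}` (equivalently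
`ν_0^w − μ ∈ Q∨_{D_m}`) and `w·x − x ∈ Conv(S_{2m}^∘ μ)` for all `x` in the base alcove. -/
def MuPermissible (m q : ℕ) (t : VecZ m) (σ : Equiv.Perm (Fin (2 * m))) : Prop :=
  NuCongQvee m q t σ 0 ∧
  ∀ x : VecR m, InAlcove m x → (fun j => actR m t σ x j - x j) ∈ ConvMu m q

/-- the coroot `α∨_{i,j} = e_i − e_j + e_{j*} − e_{i*}`. -/
def corootD (m : ℕ) (i j l : Fin (2 * m)) : ℤ :=
  (if l = i then 1 else 0) - (if l = j then 1 else 0) +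
    (if l = j.rev then 1 else 0) - (if l = i.rev then 1 else 0)

/-- `(t', σ')` represents `s_{α̃_{i,j;d}} · w` for `w = t_t σ`: on the apartment it
acts by `x ↦ w·x − ⟨α̃_{i,j;d}, w·x⟩ α∨_{i,j}`. -/
def IsReflOf (m : ℕ) (i j : Fin (2 * m)) (d : ℤ) (t : VecZ m) (σ : Equiv.Perm (Fin (2 * m)))
    (t' : VecZ m) (σ' : Equiv.Perm (Fin (2 * m))) : Prop :=
  ∀ x : VecR m, InApartR m x → ∀ l,
    actR m t' σ' x l =
      actR m t σ x l - (actR m t σ x i - actR m t σ x j - (d : ℝ)) * (corootD m i j l : ℝ)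

/-- Membership of `i` in `2mℤ ± I`. -/
def FaceIdxD (m : ℕ) (I : Finset ℕ) (i : ℤ) : Prop :=
  ∃ a ∈ I, ∃ b : ℤ, i = 2 * (m : ℤ) * b + (a : ℤ) ∨ i = 2 * (m : ℤ) * b - (a : ℤ)

/-- `v` is a `d`-face of type `(2m, I)`. -/
structure IsFaceD (m : ℕ) (I : Finset ℕ) (d : ℤ) (v : ℤ → VecZ m) : Prop where
  per : ∀ i, FaceIdxD m I i → ∀ j, v (i + 2 * (m : ℤ)) j = v i j - 1
  mono : ∀ i i', FaceIdxD m I i → FaceIdxD m I i' → i ≤ i' → ∀ j, v i' j ≤ v i j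
  sumEq : ∀ i i', FaceIdxD m I i → FaceIdxD m I i' → (∑ j, v i j) - (∑ j, v i' j) = i' - i
  dual : ∀ i, FaceIdxD m I i → ∀ j, v i j + v (-i) j.rev = d

/-- `μ_i^v := v_i − ω_i` for a face `v`. -/
def muFaceD (m : ℕ) (v : ℤ → VecZ m) (i : ℤ) (j : Fin (2 * m)) : ℤ := v i j - omegaD m i j

/-- `ε` of a translation vector: the sum of the first `m` entries mod 2. -/
def epsVec (m : ℕ) (x : VecZ m) : ZMod 2 :=
  ((∑ j ∈ Finset.univ.filter (fun j : Fin (2 * m) => (j : ℕ) < m), x j : ℤ) : ZMod 2)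

/-- membership of `(v, γ)` in `F_{I,D_m}`. -/
def MemFD (m : ℕ) (I : Finset ℕ) (v : ℤ → VecZ m) (γ : ZMod 2) : Prop :=
  (∃ d, IsFaceD m I d v) ∧
  (if 0 ∈ I then
    if m ∈ I then
      (fun j => muFaceD m v 0 j - muFaceD m v (m : ℤ) j) ∈ QveeD m ∧
        γ = epsVec m (fun j => muFaceD m v 0 j)
    else γ = epsVec m (fun j => muFaceD m v 0 j)
  else if m ∈ I then γ = epsVec m (fun j => muFaceD m v (m : ℤ) j)
  else True)

/-- membership of `t_tx σx` in `W_{I,D_m}` (the group conditions on `(tx, σx)` being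
assumed separately): it lies in `W_{aff,D_m}` and fixes `a_k` for all `k ∈ I`. -/
def MemWI (m : ℕ) (I : Finset ℕ) (tx : VecZ m) (σx : Equiv.Perm (Fin (2 * m))) : Prop :=
  tx ∈ QveeD m ∧ ∀ k ∈ I, ∀ j, (tx j : ℝ) + aD m k (σx⁻¹ j) = aD m k j

/-- (SP1) at `k` for a face. -/
def SP1F (m : ℕ) (v : ℤ → VecZ m) (k : ℕ) : Prop :=
  (∀ j, muFaceD m v (k : ℤ) j + muFaceD m v (-(k : ℤ)) j.rev = 2) ∧
  (∀ j, 0 ≤ muFaceD m v (k : ℤ) j ∧ muFaceD m v (k : ℤ) j ≤ 2)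

/-- (SP2) at `k` for a face. -/
def SP2F (m q : ℕ) (v : ℤ → VecZ m) (k : ℕ) : Prop :=
  Set.ncard {j : Fin (2 * m) | muFaceD m v (k : ℤ) j = 2} ≤ q

/-- (SP3) at `k` for a face. -/
def SP3F (m q : ℕ) (v : ℤ → VecZ m) (k : ℕ) : Prop :=
  ((∀ j, muFaceD m v (k : ℤ) j = muFaceD m v (-(k : ℤ)) j) ∧
      (fun j => muFaceD m v (k : ℤ) j - muQ m q j) ∉ QveeD m) →
    ∃ j₁ j₂ : Fin (2 * m), memA m k j₁ ∧ memB m k j₂ ∧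
      muFaceD m v (k : ℤ) j₁ = 1 ∧ muFaceD m v (k : ℤ) j₂ = 1

/-- `(v, γ) ∈ F_{I,D_m}` is μ-spin-permissible. -/
def SpinPermF (m q : ℕ) (I : Finset ℕ) (v : ℤ → VecZ m) (γ : ZMod 2) : Prop :=
  γ = epsVec m (fun j => muQ m q j) ∧ ∀ k ∈ I, SP1F m v k ∧ SP2F m q v k ∧ SP3F m q v k

variable {m : ℕ}

open scoped Classical

lemma rev_val (j : Fin (2*m)) : (j.rev : ℕ) = 2*m - 1 - (j:ℕ) := by
  rw [Fin.val_rev]; omega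

lemma rev_ne (j : Fin (2*m)) : j.rev ≠ j := by
  intro h
  have h2 := congrArg Fin.val h
  have := j.isLt
  rw [rev_val] at h2; omega

lemma rev_inj {a b : Fin (2*m)} (h : a.rev = b.rev) : a = b := Fin.rev_injective h

lemma swap_rev (a b j : Fin (2*m)) :
    Equiv.swap a b j.rev = (Equiv.swap a.rev b.rev j).rev := by
  rcases eq_or_ne j a.rev with rfl | ha
  · simp [Fin.rev_rev]
  · rcases eq_or_ne j b.rev with rfl | hb
    · simp [Fin.rev_rev]
    · rw [Equiv.swap_apply_of_ne_of_ne ha hb,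
        Equiv.swap_apply_of_ne_of_ne (fun h => ha (by rw [← h, Fin.rev_rev]))
          (fun h => hb (by rw [← h, Fin.rev_rev]))]

/-- a swap of a pair `{a, a.rev}` commutes with rev -/
lemma swap_pair_rev_comm (a : Fin (2*m)) (j : Fin (2*m)) :
    Equiv.swap a a.rev j.rev = (Equiv.swap a a.rev j).rev := by
  rw [swap_rev, Fin.rev_rev, Equiv.swap_comm]

lemma card_filter_rev (P Q : Fin (2*m) → Prop) [DecidablePred P] [DecidablePred Q]
    (h : ∀ j, P j ↔ Q j.rev) :
    (univ.filter P).card = (univ.filter Q).card := by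
  refine card_bij' (fun a _ => a.rev) (fun a _ => a.rev) ?_ ?_ ?_ ?_
  · intro a ha; simp only [mem_filter, mem_univ, true_and] at ha ⊢; exact (h a).1 ha
  · intro a ha; simp only [mem_filter, mem_univ, true_and] at ha ⊢
    have := (h a.rev).2; rw [Fin.rev_rev] at this; exact this ha
  · intro a _; exact Fin.rev_rev a
  · intro a _; exact Fin.rev_rev a

lemma card_filter_lt (q : ℕ) (h : q ≤ 2*m) :
    (univ.filter (fun l : Fin (2*m) => (l:ℕ) < q)).card = q := by
  rw [show (univ.filter (fun l : Fin (2*m) => (l:ℕ) < q)) = (Finset.range q).attachFin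
    (fun x hx => lt_of_lt_of_le (Finset.mem_range.mp hx) h) from ?_,
    Finset.card_attachFin, Finset.card_range]
  ext l; simp [Finset.mem_attachFin]

lemma card_filter_ge (q : ℕ) (h : q ≤ m) :
    (univ.filter (fun l : Fin (2*m) => 2*m - q ≤ (l:ℕ))).card = q := by
  rw [card_filter_rev (fun l => 2*m - q ≤ (l:ℕ)) (fun l => (l:ℕ) < q) ?_, card_filter_lt q (by omega)]
  intro j; show _ ↔ (j.rev : ℕ) < q; rw [rev_val]; have := j.isLt; omega

/-- even cardinality of rev-stable filters -/
lemma even_card_rev_stable (P : Fin (2*m) → Prop) [DecidablePred P] (h : ∀ j, P j ↔ P j.rev) :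
    Even (univ.filter P).card := by
  have h1 : (univ.filter (fun j => P j ∧ (j:ℕ) < m)).card
      = (univ.filter (fun j => P j ∧ ¬ ((j:ℕ) < m))).card := by
    refine card_filter_rev _ _ (fun j => ?_)
    have := j.isLt
    constructor
    · rintro ⟨h1, h2⟩; exact ⟨(h j).mp h1, by rw [rev_val]; omega⟩
    · rintro ⟨h1, h2⟩
      rw [rev_val] at h2
      exact ⟨by have := (h j.rev).mp h1; rwa [Fin.rev_rev] at this, by omega⟩
  have h2 := Finset.card_filter_add_card_filter_not
    (s := univ.filter P) (p := fun j : Fin (2*m) => (j:ℕ) < m)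
  rw [Finset.filter_filter, Finset.filter_filter] at h2
  refine ⟨(univ.filter (fun j => P j ∧ (j:ℕ) < m)).card, ?_⟩
  rw [← h2, h1]


section MuQ
variable {m q : ℕ}

lemma muQ_pair (hq : q ≤ m) (l : Fin (2*m)) : muQ m q l + muQ m q l.rev = 2 := by
  have hl := l.isLt
  have hr : (l.rev : ℕ) = 2*m - 1 - (l:ℕ) := rev_val l
  unfold muQ
  split_ifs <;> omega

lemma muQ_lt_iff (hq : q ≤ m) (hm : 1 ≤ m) (l : Fin (2*m)) :
    muQ m q l = 2 ↔ (l:ℕ) < q := by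
  unfold muQ; have := l.isLt; split_ifs <;> omega

lemma muQ_mid (hq : q ≤ m) (l : Fin (2*m)) (h1 : ¬ (l:ℕ) < q) (h2 : ¬ (2*m - q ≤ (l:ℕ))) :
    muQ m q l = 1 := by
  unfold muQ; split_ifs <;> omega

lemma muQ_hi (hq : q ≤ m) (l : Fin (2*m)) (h2 : 2*m - q ≤ (l:ℕ)) (hm : 1 ≤ m) :
    muQ m q l = 0 := by
  have := l.isLt; unfold muQ; split_ifs <;> omega

lemma sum_abs_muQ (hq : q ≤ m) (hm : 1 ≤ m) :
    ∑ l : Fin (2*m), |((muQ m q l : ℤ) : ℝ) - 1| = 2*q := by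
  have hpt : ∀ l : Fin (2*m), |((muQ m q l : ℤ) : ℝ) - 1|
      = (if (l:ℕ) < q then (1:ℝ) else 0) + (if 2*m - q ≤ (l:ℕ) then (1:ℝ) else 0) := by
    intro l
    have := l.isLt
    by_cases h1 : (l:ℕ) < q
    · rw [if_pos h1, if_neg (by omega), (muQ_lt_iff hq hm l).mpr h1]; norm_num
    · by_cases h2 : 2*m - q ≤ (l:ℕ)
      · rw [if_neg h1, if_pos h2, muQ_hi hq l h2 hm]; norm_num
      · rw [if_neg h1, if_neg h2, muQ_mid hq l h1 h2]; norm_num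
  rw [Finset.sum_congr rfl (fun l _ => hpt l), Finset.sum_add_distrib,
    Finset.sum_boole, Finset.sum_boole, card_filter_lt q (by omega), card_filter_ge q hq]
  push_cast; ring

end MuQ

section IntVal

lemma isIntVal_int (z : ℤ) : IsIntVal ((z:ℝ)) := ⟨z, rfl⟩

lemma isIntVal_zero : IsIntVal (0:ℝ) := ⟨0, by norm_num⟩
lemma isIntVal_one : IsIntVal (1:ℝ) := ⟨1, by norm_num⟩
lemma isIntVal_two : IsIntVal (2:ℝ) := ⟨2, by norm_num⟩

lemma not_isIntVal_half : ¬ IsIntVal ((1:ℝ)/2) := by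
  rintro ⟨z, hz⟩
  have : (2*z : ℤ) = (1:ℤ) := by
    have : (2:ℝ) * z = 1 := by rw [← hz]; ring
    exact_mod_cast this
  omega

lemma not_isIntVal_threehalf : ¬ IsIntVal ((3:ℝ)/2) := by
  rintro ⟨z, hz⟩
  have : (2*z : ℤ) = (3:ℤ) := by
    have : (2:ℝ) * z = 3 := by rw [← hz]; ring
    exact_mod_cast this
  omega

lemma classify_half (z : ℤ) (h0 : 0 ≤ (z:ℝ)/2) (h2 : (z:ℝ)/2 ≤ 2) :
    (z:ℝ)/2 = 0 ∨ (z:ℝ)/2 = 1/2 ∨ (z:ℝ)/2 = 1 ∨ (z:ℝ)/2 = 3/2 ∨ (z:ℝ)/2 = 2 := by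
  have hz0 : (0:ℤ) ≤ z := by
    have : (0:ℝ) ≤ (z:ℝ) := by linarith
    exact_mod_cast this
  have hz4 : z ≤ 4 := by
    have : (z:ℝ) ≤ 4 := by linarith
    exact_mod_cast this
  interval_cases z <;> norm_num

lemma abs_eval (v : ℝ) (h : v = 0 ∨ v = 1/2 ∨ v = 1 ∨ v = 3/2 ∨ v = 2) :
    |v - 1| = (if v = 2 then (1:ℝ) else 0) + (if v = 0 then (1:ℝ) else 0)
      + (if ¬ IsIntVal v then (1:ℝ)/2 else 0) := by
  rcases h with rfl | rfl | rfl | rfl | rfl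
  · rw [if_neg (by norm_num), if_pos rfl, if_neg (not_not_intro isIntVal_zero)]; norm_num
  · rw [if_neg (by norm_num), if_neg (by norm_num), if_pos not_isIntVal_half]; norm_num
  · rw [if_neg (by norm_num), if_neg (by norm_num), if_neg (not_not_intro isIntVal_one)]
    norm_num
  · rw [if_neg (by norm_num), if_neg (by norm_num), if_pos not_isIntVal_threehalf]; norm_num
  · rw [if_pos rfl, if_neg (by norm_num), if_neg (not_not_intro isIntVal_two)]; norm_num

end IntVal


section Counting
variable {m q : ℕ}

lemma ncard_setOf (P : Fin (2*m) → Prop) [DecidablePred P] :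
    Set.ncard {j : Fin (2*m) | P j} = (univ.filter P).card := by
  classical
  rw [Set.ncard_eq_toFinset_card', Set.toFinset_setOf]

lemma sum_abs_eq (x : VecR m) (hpair : ∀ j, x j + x j.rev = 2)
    (hval : ∀ j, x j = 0 ∨ x j = 1/2 ∨ x j = 1 ∨ x j = 3/2 ∨ x j = 2) :
    ∑ j, |x j - 1| = 2 * ((univ.filter (fun j => x j = 2)).card : ℝ)
      + ((univ.filter (fun j => ¬ IsIntVal (x j))).card : ℝ) / 2 := by
  have h0 : ∑ j, |x j - 1| = ∑ j, ((if x j = 2 then (1:ℝ) else 0) + (if x j = 0 then (1:ℝ) else 0)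
      + (if ¬ IsIntVal (x j) then (1:ℝ)/2 else 0)) :=
    Finset.sum_congr rfl (fun j _ => abs_eval (x j) (hval j))
  have h02 : (univ.filter (fun j => x j = 0)).card = (univ.filter (fun j => x j = 2)).card := by
    refine card_filter_rev _ _ (fun j => ?_)
    have := hpair j; constructor <;> intro h <;> linarith
  have h3 : ∑ j : Fin (2*m), (if ¬ IsIntVal (x j) then (1:ℝ)/2 else 0)
      = ((univ.filter (fun j => ¬ IsIntVal (x j))).card : ℝ) / 2 := by
    rw [show (fun j : Fin (2*m) => if ¬ IsIntVal (x j) then (1:ℝ)/2 else 0)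
      = (fun j : Fin (2*m) => (1/2) * (if ¬ IsIntVal (x j) then (1:ℝ) else 0)) from ?_]
    · rw [← Finset.mul_sum, Finset.sum_boole]; ring
    · funext j; split_ifs <;> ring
  rw [h0, Finset.sum_add_distrib, Finset.sum_add_distrib, Finset.sum_boole, Finset.sum_boole, h3, h02]
  push_cast; ring

end Counting

section OrbitEasy
variable {m q : ℕ}

lemma inv_rev_comm {σ : Equiv.Perm (Fin (2*m))} (hσ : InSO m σ) (j : Fin (2*m)) :
    σ⁻¹ j.rev = (σ⁻¹ j).rev := by
  have := hσ.2 (σ⁻¹ j)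
  rw [show σ (σ⁻¹ j) = j from Equiv.apply_symm_apply σ j] at this
  rw [← this, show σ⁻¹ (σ (σ⁻¹ j).rev) = (σ⁻¹ j).rev from Equiv.symm_apply_apply σ (σ⁻¹ j).rev]

lemma muQ_mem (l : Fin (2*m)) : muQ m q l = 0 ∨ muQ m q l = 1 ∨ muQ m q l = 2 := by
  unfold muQ; split_ifs <;> omega

lemma orbit_pair (hq : q ≤ m) {x : VecR m} (hx : x ∈ OrbitMu m q) (j : Fin (2*m)) :
    x j + x j.rev = 2 := by
  obtain ⟨σ, hσ, he⟩ := hx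
  rw [he j, he j.rev, inv_rev_comm hσ]
  have := muQ_pair hq (σ⁻¹ j)
  exact_mod_cast this

lemma orbit_box {x : VecR m} (hx : x ∈ OrbitMu m q) (j : Fin (2*m)) :
    0 ≤ x j ∧ x j ≤ 2 := by
  obtain ⟨σ, hσ, he⟩ := hx
  rw [he j]
  rcases muQ_mem (m := m) (q := q) (σ⁻¹ j) with h | h | h <;> rw [h] <;> norm_num

lemma orbit_sum (hq : q ≤ m) (hm : 1 ≤ m) {x : VecR m} (hx : x ∈ OrbitMu m q) :
    ∑ j, |x j - 1| = 2*q := by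
  obtain ⟨σ, hσ, he⟩ := hx
  rw [Finset.sum_congr rfl (fun j _ => by rw [he j]),
    Equiv.sum_comp σ⁻¹ (fun l => |((muQ m q l : ℤ):ℝ) - 1|), sum_abs_muQ hq hm]

lemma convMu_subset (hq : q ≤ m) (hm : 1 ≤ m) :
    ConvMu m q ⊆ {x : VecR m | (∀ j, x j + x j.rev = 2) ∧ (∀ j, 0 ≤ x j ∧ x j ≤ 2)
      ∧ ∑ j, |x j - 1| ≤ 2*q} := by
  refine convexHull_min ?_ ?_
  · intro x hx
    exact ⟨orbit_pair hq hx, orbit_box hx, le_of_eq (orbit_sum hq hm hx)⟩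
  · rintro x ⟨hx1, hx2, hx3⟩ y ⟨hy1, hy2, hy3⟩ a b ha hb hab
    refine ⟨fun j => ?_, fun j => ?_, ?_⟩
    · simp only [Pi.add_apply, Pi.smul_apply, smul_eq_mul]
      have := hx1 j; have := hy1 j; nlinarith
    · simp only [Pi.add_apply, Pi.smul_apply, smul_eq_mul]
      have := hx2 j; have := hy2 j
      constructor <;> nlinarith
    · calc ∑ j, |(a • x + b • y) j - 1| ≤ ∑ j, (a * |x j - 1| + b * |y j - 1|) := by
            refine Finset.sum_le_sum (fun j _ => ?_)
            simp only [Pi.add_apply, Pi.smul_apply, smul_eq_mul]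
            have h1 : a * x j + b * y j - 1 = a * (x j - 1) + b * (y j - 1) := by
              linear_combination hab
            rw [h1]
            calc |a * (x j - 1) + b * (y j - 1)| ≤ |a * (x j - 1)| + |b * (y j - 1)| := abs_add_le _ _
              _ = a * |x j - 1| + b * |y j - 1| := by
                  rw [abs_mul, abs_mul, abs_of_nonneg ha, abs_of_nonneg hb]
        _ = a * ∑ j, |x j - 1| + b * ∑ j, |y j - 1| := by
            rw [Finset.sum_add_distrib, Finset.mul_sum, Finset.mul_sum]
        _ ≤ a * (2*q) + b * (2*q) := by
            have h4 : (0:ℝ) ≤ ∑ j, |x j - 1| := Finset.sum_nonneg (fun j _ => abs_nonneg _)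
            have h5 : (0:ℝ) ≤ ∑ j, |y j - 1| := Finset.sum_nonneg (fun j _ => abs_nonneg _)
            gcongr
        _ = 2*q := by linear_combination (2*(q:ℝ)) * hab

end OrbitEasy


section Perm
variable {m q : ℕ}

lemma fne {n : ℕ} {x y : Fin n} (h : (x:ℕ) ≠ (y:ℕ)) : x ≠ y :=
  fun e => h (congrArg Fin.val e)

lemma perm_inv_rev_comm {σ : Equiv.Perm (Fin (2*m))} (h : ∀ j, σ j.rev = (σ j).rev)
    (j : Fin (2*m)) : σ⁻¹ j.rev = (σ⁻¹ j).rev := by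
  have := h (σ⁻¹ j)
  rw [show σ (σ⁻¹ j) = j from Equiv.apply_symm_apply σ j] at this
  rw [← this, show σ⁻¹ (σ (σ⁻¹ j).rev) = (σ⁻¹ j).rev from Equiv.symm_apply_apply σ (σ⁻¹ j).rev]

lemma swap_comm_apply {n : ℕ} (a b c d x : Fin n) (h1 : a ≠ c) (h2 : a ≠ d) (h3 : b ≠ c)
    (h4 : b ≠ d) :
    Equiv.swap a b (Equiv.swap c d x) = Equiv.swap c d (Equiv.swap a b x) := by
  rcases eq_or_ne x c with rfl | xc
  · rw [Equiv.swap_apply_left, Equiv.swap_apply_of_ne_of_ne h1.symm h3.symm,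
      Equiv.swap_apply_of_ne_of_ne h2.symm h4.symm, Equiv.swap_apply_left]
  · rcases eq_or_ne x d with rfl | xd
    · rw [Equiv.swap_apply_right, Equiv.swap_apply_of_ne_of_ne h2.symm h4.symm,
        Equiv.swap_apply_of_ne_of_ne h1.symm h3.symm, Equiv.swap_apply_right]
    · rw [Equiv.swap_apply_of_ne_of_ne xc xd]
      rcases eq_or_ne x a with rfl | xa
      · rw [Equiv.swap_apply_left, Equiv.swap_apply_of_ne_of_ne h3 h4]
      · rcases eq_or_ne x b with rfl | xb
        · rw [Equiv.swap_apply_right, Equiv.swap_apply_of_ne_of_ne h1 h2]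
        · rw [Equiv.swap_apply_of_ne_of_ne xa xb, Equiv.swap_apply_of_ne_of_ne xc xd]

lemma tau_rev_comm (a b : Fin (2*m)) (hab : a ≠ b.rev) (j : Fin (2*m)) :
    (Equiv.swap a b * Equiv.swap a.rev b.rev) j.rev
      = ((Equiv.swap a b * Equiv.swap a.rev b.rev) j).rev := by
  rcases eq_or_ne a b with rfl | hne
  · simp only [Equiv.Perm.mul_apply]
    rw [show Equiv.swap a a = Equiv.refl _ from Equiv.swap_self a,
      show Equiv.swap a.rev a.rev = Equiv.refl _ from Equiv.swap_self a.rev]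
    rfl
  · have hba : b ≠ a.rev := fun h => hab (by rw [h, Fin.rev_rev])
    have harb : a.rev ≠ b.rev := fun h => hne (rev_inj h)
    simp only [Equiv.Perm.mul_apply]
    have s1 : Equiv.swap a.rev b.rev j.rev = (Equiv.swap a b j).rev := by
      rw [swap_rev a.rev b.rev j, Fin.rev_rev, Fin.rev_rev]
    rw [s1, swap_rev a b (Equiv.swap a b j)]
    congr 1
    exact swap_comm_apply a.rev b.rev a b j (rev_ne a) hba.symm (Ne.symm hab) (rev_ne b)

lemma tau_invol (a b : Fin (2*m)) (hab : a ≠ b.rev) (x : Fin (2*m)) :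
    (Equiv.swap a b * Equiv.swap a.rev b.rev) ((Equiv.swap a b * Equiv.swap a.rev b.rev) x)
      = x := by
  rcases eq_or_ne a b with rfl | hne
  · simp only [Equiv.Perm.mul_apply, Equiv.swap_self]; rfl
  · have hba : b ≠ a.rev := fun h => hab (by rw [h, Fin.rev_rev])
    simp only [Equiv.Perm.mul_apply]
    rw [swap_comm_apply a b a.rev b.rev _ (rev_ne a).symm hab hba (rev_ne b).symm,
      Equiv.swap_apply_self, Equiv.swap_apply_self]

lemma exists_perm_aux (hm : 2 ≤ m) (hq : q ≤ m - 1) :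
    ∀ (n : ℕ) (A : Finset (Fin (2*m))),
      (A \ univ.filter (fun l : Fin (2*m) => (l:ℕ) < q)).card ≤ n →
      A.card = q → (∀ j ∈ A, j.rev ∉ A) →
      ∃ σ : Equiv.Perm (Fin (2*m)), InSO m σ ∧ ∀ l, σ l ∈ A ↔ (l:ℕ) < q := by
  intro n
  induction n with
  | zero =>
      intro A hc hcard hfree
      have hsub : A ⊆ univ.filter (fun l : Fin (2*m) => (l:ℕ) < q) := by
        rw [← Finset.sdiff_eq_empty_iff_subset]
        exact Finset.card_eq_zero.mp (Nat.le_zero.mp hc)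
      have hA : A = univ.filter (fun l : Fin (2*m) => (l:ℕ) < q) := by
        refine Finset.eq_of_subset_of_card_le hsub ?_
        rw [card_filter_lt q (by omega), hcard]
      refine ⟨1, ⟨by simp, fun j => rfl⟩, fun l => ?_⟩
      rw [hA]
      simp
  | succ n ih =>
      intro A hc hcard hfree
      set A₀ := univ.filter (fun l : Fin (2*m) => (l:ℕ) < q) with hA₀
      by_cases h0 : (A \ A₀).card = 0
      · exact ih A (by omega) hcard hfree
      · obtain ⟨a, ha⟩ := Finset.card_pos.mp (Nat.pos_of_ne_zero h0)
        have haA : a ∈ A := (Finset.mem_sdiff.mp ha).1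
        have haq : ¬ ((a:ℕ) < q) := by
          have := (Finset.mem_sdiff.mp ha).2
          simpa [hA₀] using this
        by_cases hb : ∃ b ∈ A₀ \ A, b ≠ a.rev
        · obtain ⟨b, hbmem, hbne⟩ := hb
          have hbA₀ : (b:ℕ) < q := by
            have := (Finset.mem_sdiff.mp hbmem).1
            simpa [hA₀] using this
          have hbA : b ∉ A := (Finset.mem_sdiff.mp hbmem).2
          have hne : a ≠ b := fun h => haq (h ▸ hbA₀)
          have hab : a ≠ b.rev := fun h => hbne (by rw [h, Fin.rev_rev])
          set τ := Equiv.swap a b * Equiv.swap a.rev b.rev with hτ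
          have hτsymm : ∀ x, τ.symm x = τ x := by
            intro x
            rw [Equiv.symm_apply_eq]
            exact (tau_invol a b hab x).symm
          have hτrev : ∀ j, τ j.rev = (τ j).rev := tau_rev_comm a b hab
          have hτa : τ a = b := by
            rw [hτ]
            simp only [Equiv.Perm.mul_apply]
            rw [show Equiv.swap a.rev b.rev a = a from
              Equiv.swap_apply_of_ne_of_ne (rev_ne a).symm hab, Equiv.swap_apply_left]
          have hbra : b ≠ a.rev := hbne
          have hτrb : τ b.rev = a.rev := by
            rw [hτ]
            simp only [Equiv.Perm.mul_apply]
            rw [show Equiv.swap a.rev b.rev b.rev = a.rev from Equiv.swap_apply_right _ _,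
              show Equiv.swap a b a.rev = a.rev from
                Equiv.swap_apply_of_ne_of_ne (rev_ne a) (Ne.symm hbra)]
          have hτra : τ a.rev = b.rev := by
            rw [hτ]
            simp only [Equiv.Perm.mul_apply]
            rw [show Equiv.swap a.rev b.rev a.rev = b.rev from Equiv.swap_apply_left _ _,
              show Equiv.swap a b b.rev = b.rev from
                Equiv.swap_apply_of_ne_of_ne (fun h => hab h.symm) (rev_ne b)]
          have hτb : τ b = a := by
            rw [hτ]
            simp only [Equiv.Perm.mul_apply]
            rw [show Equiv.swap a.rev b.rev b = b from
              Equiv.swap_apply_of_ne_of_ne hbra (rev_ne b).symm, Equiv.swap_apply_right]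
          have hτother : ∀ x, x ≠ a → x ≠ b → x ≠ a.rev → x ≠ b.rev → τ x = x := by
            intro x h1 h2 h3 h4
            rw [hτ]
            simp only [Equiv.Perm.mul_apply]
            rw [show Equiv.swap a.rev b.rev x = x from Equiv.swap_apply_of_ne_of_ne h3 h4,
              show Equiv.swap a b x = x from Equiv.swap_apply_of_ne_of_ne h1 h2]
          set A' := A.map τ.toEmbedding with hA'
          have hmemA' : ∀ x, x ∈ A' ↔ τ x ∈ A := by
            intro x
            rw [hA', Finset.mem_map_equiv, hτsymm]
          have hcard' : A'.card = q := by rw [hA', Finset.card_map, hcard]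
          have hfree' : ∀ j ∈ A', j.rev ∉ A' := by
            intro j hj
            rw [hmemA'] at hj ⊢
            rw [hτrev]
            exact hfree _ hj
          -- measure decrease
          have hrbA₀ : b.rev ∉ A₀ := by
            have : (b.rev : ℕ) = 2*m - 1 - (b:ℕ) := rev_val b
            have hb2 := b.isLt
            simp only [hA₀, Finset.mem_filter, Finset.mem_univ, true_and]
            omega
          have hmeas : (A' \ A₀).card ≤ n := by
            by_cases hrb : b.rev ∈ A
            · -- A' \ A₀ ⊆ insert a.rev (((A \ A₀).erase a).erase b.rev)
              have hsub2 : A' \ A₀ ⊆ insert a.rev (((A \ A₀).erase a).erase b.rev) := by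
                intro x hx
                obtain ⟨hx1, hx2⟩ := Finset.mem_sdiff.mp hx
                rw [hmemA'] at hx1
                rcases eq_or_ne x a.rev with rfl | hxra
                · exact Finset.mem_insert_self _ _
                · refine Finset.mem_insert_of_mem ?_
                  have hxa : x ≠ a := by
                    rintro rfl
                    rw [hτa] at hx1; exact hbA hx1
                  have hxb : x ≠ b := by
                    rintro rfl
                    exact hx2 ((Finset.mem_sdiff.mp hbmem).1)
                  have hxrb : x ≠ b.rev := by
                    rintro rfl
                    rw [hτrb] at hx1
                    exact hfree a haA hx1
                  rw [hτother x hxa hxb hxra hxrb] at hx1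
                  rw [Finset.mem_erase, Finset.mem_erase]
                  exact ⟨hxrb, hxa, Finset.mem_sdiff.mpr ⟨hx1, hx2⟩⟩
              have h2card : 2 ≤ (A \ A₀).card := by
                have : {a, b.rev} ⊆ A \ A₀ := by
                  intro x hx
                  rcases Finset.mem_insert.mp hx with rfl | hx
                  · exact ha
                  · rw [Finset.mem_singleton.mp hx]
                    exact Finset.mem_sdiff.mpr ⟨hrb, hrbA₀⟩
                have := Finset.card_le_card this
                rwa [Finset.card_insert_of_notMem (by simp [hab]), Finset.card_singleton] at this
              calc (A' \ A₀).card ≤ _ := Finset.card_le_card hsub2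
                _ ≤ (((A \ A₀).erase a).erase b.rev).card + 1 := Finset.card_insert_le _ _
                _ ≤ n := by
                    rw [Finset.card_erase_of_mem (Finset.mem_erase.mpr
                      ⟨fun h => hab h.symm, Finset.mem_sdiff.mpr ⟨hrb, hrbA₀⟩⟩),
                      Finset.card_erase_of_mem ha]
                    omega
            · have hsub2 : A' \ A₀ ⊆ (A \ A₀).erase a := by
                intro x hx
                obtain ⟨hx1, hx2⟩ := Finset.mem_sdiff.mp hx
                rw [hmemA'] at hx1
                have hxa : x ≠ a := by
                  rintro rfl
                  rw [hτa] at hx1; exact hbA hx1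
                have hxb : x ≠ b := by
                  rintro rfl
                  exact hx2 ((Finset.mem_sdiff.mp hbmem).1)
                have hxra : x ≠ a.rev := by
                  rintro rfl
                  rw [hτra] at hx1; exact hrb hx1
                have hxrb : x ≠ b.rev := by
                  rintro rfl
                  rw [hτrb] at hx1
                  exact hfree a haA hx1
                rw [hτother x hxa hxb hxra hxrb] at hx1
                exact Finset.mem_erase.mpr ⟨hxa, Finset.mem_sdiff.mpr ⟨hx1, hx2⟩⟩
              calc (A' \ A₀).card ≤ ((A \ A₀).erase a).card := Finset.card_le_card hsub2
                _ ≤ n := by rw [Finset.card_erase_of_mem ha]; omega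
          obtain ⟨σ', hσ', hmem'⟩ := ih A' hmeas hcard' hfree'
          refine ⟨τ * σ', ⟨?_, ?_⟩, ?_⟩
          · rw [map_mul, hσ'.1, hτ, map_mul, Equiv.Perm.sign_swap hne,
              Equiv.Perm.sign_swap (fun h => hne (rev_inj h))]
            norm_num
          · intro j
            simp only [Equiv.Perm.mul_apply]
            rw [hσ'.2 j, hτrev]
          · intro l
            simp only [Equiv.Perm.mul_apply]
            rw [← hmem' l, hmemA']
        · -- A₀ \ A = {a.rev}
          push_neg at hb
          have hcc : (A₀ \ A).card = (A \ A₀).card := by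
            have h1 := Finset.card_sdiff_add_card_inter A A₀
            have h2 := Finset.card_sdiff_add_card_inter A₀ A
            rw [Finset.inter_comm] at h2
            have : A₀.card = q := card_filter_lt q (by omega)
            omega
          have hne0 : (A₀ \ A).Nonempty := by
            rw [← Finset.card_pos, hcc]
            omega
          have hsing : A₀ \ A = {a.rev} := by
            refine Finset.eq_singleton_iff_nonempty_unique_mem.mpr ⟨hne0, fun x hx => hb x hx⟩
          have hAsd : A \ A₀ = {a} := by
            refine Finset.eq_singleton_iff_nonempty_unique_mem.mpr ⟨⟨a, ha⟩, ?_⟩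
            intro x hx
            by_contra hxa
            have : 2 ≤ (A \ A₀).card := by
              have : {x, a} ⊆ A \ A₀ := by
                intro y hy
                rcases Finset.mem_insert.mp hy with rfl | hy
                · exact hx
                · rw [Finset.mem_singleton.mp hy]; exact ha
              have := Finset.card_le_card this
              rwa [Finset.card_insert_of_notMem (by simp [hxa]), Finset.card_singleton] at this
            rw [← hcc, hsing, Finset.card_singleton] at this
            omega
          have hraq : (a.rev : ℕ) < q := by
            have : a.rev ∈ A₀ := (Finset.mem_sdiff.mp (hsing ▸ Finset.mem_singleton_self a.rev)).1
            simpa [hA₀] using this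
          have haval : 2*m - q ≤ (a:ℕ) := by
            have := rev_val a
            have := a.isLt
            omega
          -- memA characterization
          have hmemA : ∀ x, x ∈ A ↔ ((x:ℕ) < q ∧ x ≠ a.rev) ∨ x = a := by
            intro x
            constructor
            · intro hx
              by_cases hx0 : x ∈ A₀
              · left
                refine ⟨by simpa [hA₀] using hx0, ?_⟩
                rintro rfl
                have : a.rev ∈ A₀ \ A := hsing ▸ Finset.mem_singleton_self a.rev
                exact (Finset.mem_sdiff.mp this).2 hx
              · right
                have : x ∈ A \ A₀ := Finset.mem_sdiff.mpr ⟨hx, hx0⟩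
                rw [hAsd] at this
                exact Finset.mem_singleton.mp this
            · rintro (⟨hx1, hx2⟩ | rfl)
              · by_contra hxA
                have : x ∈ A₀ \ A := Finset.mem_sdiff.mpr ⟨by simp [hA₀, hx1], hxA⟩
                rw [hsing] at this
                exact hx2 (Finset.mem_singleton.mp this)
              · exact haA
          have hmlt : m - 1 < 2*m := by omega
          have hmlt2 : m < 2*m := by omega
          set p : Fin (2*m) := ⟨m-1, hmlt⟩ with hp
          have hprev : (p.rev : ℕ) = m := by rw [rev_val]; simp [hp]; omega
          set σ := Equiv.swap a a.rev * Equiv.swap p p.rev with hσdef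
          have hav := a.isLt
          have hrav : (a.rev:ℕ) = 2*m-1-(a:ℕ) := rev_val a
          have d1 : a ≠ p := fne (by simp [hp]; omega)
          have d2 : a ≠ p.rev := fne (by rw [hprev]; omega)
          have d3 : a.rev ≠ p := fne (by simp [hp]; omega)
          have d4 : a.rev ≠ p.rev := fne (by rw [hprev]; omega)
          have e1 : σ a = a.rev := by
            rw [hσdef]
            simp only [Equiv.Perm.mul_apply]
            rw [show Equiv.swap p p.rev a = a from Equiv.swap_apply_of_ne_of_ne d1 d2,
              Equiv.swap_apply_left]
          have e2 : σ a.rev = a := by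
            rw [hσdef]
            simp only [Equiv.Perm.mul_apply]
            rw [show Equiv.swap p p.rev a.rev = a.rev from Equiv.swap_apply_of_ne_of_ne d3 d4,
              Equiv.swap_apply_right]
          have e3 : σ p = p.rev := by
            rw [hσdef]
            simp only [Equiv.Perm.mul_apply]
            rw [show Equiv.swap p p.rev p = p.rev from Equiv.swap_apply_left _ _,
              show Equiv.swap a a.rev p.rev = p.rev from
                Equiv.swap_apply_of_ne_of_ne d2.symm d4.symm]
          have e4 : σ p.rev = p := by
            rw [hσdef]
            simp only [Equiv.Perm.mul_apply]
            rw [show Equiv.swap p p.rev p.rev = p from Equiv.swap_apply_right _ _,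
              show Equiv.swap a a.rev p = p from Equiv.swap_apply_of_ne_of_ne d1.symm d3.symm]
          have e5 : ∀ l, l ≠ a → l ≠ a.rev → l ≠ p → l ≠ p.rev → σ l = l := by
            intro l h1 h2 h3 h4
            rw [hσdef]
            simp only [Equiv.Perm.mul_apply]
            rw [show Equiv.swap p p.rev l = l from Equiv.swap_apply_of_ne_of_ne h3 h4,
              show Equiv.swap a a.rev l = l from Equiv.swap_apply_of_ne_of_ne h1 h2]
          have key : ∀ l : Fin (2*m), σ l ∈ A ↔ (l:ℕ) < q := by
            intro l
            have hval := l.isLt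
            by_cases c1 : l = a
            · rw [c1, e1, hmemA]
              constructor
              · rintro (⟨_, h2⟩ | h2)
                · exact absurd rfl h2
                · exact absurd h2 (rev_ne a)
              · intro h2; exact absurd h2 haq
            · by_cases c2 : l = a.rev
              · rw [c2, e2, hmemA]
                constructor
                · intro _; exact hraq
                · intro _; right; rfl
              · by_cases c3 : l = p
                · rw [c3, e3, hmemA]
                  constructor
                  · rintro (⟨h2, _⟩ | h2)
                    · rw [hprev] at h2; omega
                    · exact absurd h2 d2.symm
                  · intro h2
                    exfalso
                    have hh : (p:ℕ) = m - 1 := by simp [hp]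
                    omega
                · by_cases c4 : l = p.rev
                  · rw [c4, e4, hmemA]
                    constructor
                    · rintro (⟨h2, _⟩ | h2)
                      · simp [hp] at h2; omega
                      · exact absurd h2 d1.symm
                    · intro h2
                      exfalso
                      rw [hprev] at h2
                      omega
                  · rw [e5 l c1 c2 c3 c4, hmemA]
                    constructor
                    · rintro (⟨h2, _⟩ | h2)
                      · exact h2
                      · exact absurd h2 c1
                    · intro h2
                      refine Or.inl ⟨h2, fun h3 => ?_⟩
                      rw [h3] at h2
                      omega
          refine ⟨σ, ⟨?_, ?_⟩, key⟩
          · rw [hσdef, map_mul, Equiv.Perm.sign_swap (rev_ne a).symm,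
              Equiv.Perm.sign_swap (fne (by rw [hprev]; simp [hp]; omega))]
            norm_num
          · intro j
            rw [hσdef]
            simp only [Equiv.Perm.mul_apply]
            rw [swap_pair_rev_comm p j, swap_pair_rev_comm a]

lemma exists_perm (hm : 2 ≤ m) (hq : q ≤ m - 1) (A : Finset (Fin (2*m)))
    (hcard : A.card = q) (hfree : ∀ j ∈ A, j.rev ∉ A) :
    ∃ σ : Equiv.Perm (Fin (2*m)), InSO m σ ∧ ∀ l, σ l ∈ A ↔ (l:ℕ) < q :=
  exists_perm_aux hm hq _ A le_rfl hcard hfree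

end Perm


section Hull
variable {m q : ℕ}

lemma vtx_mem_orbit (hm : 2 ≤ m) (hq : q ≤ m - 1) (x : VecR m)
    (hpair : ∀ j, x j + x j.rev = 2)
    (hval : ∀ j, x j = 0 ∨ x j = 1 ∨ x j = 2)
    (hcard : (univ.filter (fun j => x j = 2)).card = q) :
    x ∈ OrbitMu m q := by
  classical
  set A := univ.filter (fun j : Fin (2*m) => x j = 2) with hA
  have hfree : ∀ j ∈ A, j.rev ∉ A := by
    intro j hj
    simp only [hA, mem_filter, mem_univ, true_and] at hj ⊢
    have := hpair j
    intro h; linarith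
  obtain ⟨σ, hσ, hmem⟩ := exists_perm hm hq A hcard hfree
  refine ⟨σ, hσ, fun j => ?_⟩
  set l := σ⁻¹ j with hl
  have hjl : σ l = j := by rw [hl, show σ (σ⁻¹ j) = j from Equiv.apply_symm_apply σ j]
  have hmem' : j ∈ A ↔ (l:ℕ) < q := by rw [← hjl]; exact hmem l
  have hmemrev : j.rev ∈ A ↔ (l.rev:ℕ) < q := by
    rw [← hjl, ← hσ.2 l]; exact hmem l.rev
  by_cases h1 : (l:ℕ) < q
  · have hx : x j = 2 := by
      have := hmem'.mpr h1
      simpa [hA] using this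
    rw [hx]
    unfold muQ
    rw [if_pos h1]
    norm_num
  · by_cases h2 : 2*m - q ≤ (l:ℕ)
    · have hrl : (l.rev:ℕ) < q := by rw [rev_val]; have := l.isLt; omega
      have hx2 : x j.rev = 2 := by
        have := hmemrev.mpr hrl
        simpa [hA] using this
      have hx0 : x j = 0 := by have := hpair j; linarith
      rw [hx0, muQ_hi (by omega) l h2 (by omega)]
      norm_num
    · have hx2 : ¬ x j = 2 := fun h => h1 (hmem'.mp (by simp [hA, h]))
      have hrl : ¬ (l.rev:ℕ) < q := by rw [rev_val]; have := l.isLt; omega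
      have hxr2 : ¬ x j.rev = 2 := fun h => hrl (hmemrev.mp (by simp [hA, h]))
      have hx0 : ¬ x j = 0 := by
        intro h
        apply hxr2
        have := hpair j; linarith
      have hx1 : x j = 1 := by
        rcases hval j with h | h | h
        · exact absurd h hx0
        · exact h
        · exact absurd h hx2
      rw [hx1, muQ_mid (by omega) l h1 h2]
      norm_num

lemma int_mem_hull (hm : 2 ≤ m) (hq : q ≤ m - 1) :
    ∀ (d : ℕ) (x : VecR m), (∀ j, x j + x j.rev = 2) → (∀ j, x j = 0 ∨ x j = 1 ∨ x j = 2) →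
    (univ.filter (fun j => x j = 2)).card + d = q →
    x ∈ convexHull ℝ (OrbitMu m q) := by
  classical
  intro d
  induction d with
  | zero =>
      intro x hpair hval hcard
      exact subset_convexHull ℝ _ (vtx_mem_orbit hm hq x hpair hval (by omega))
  | succ d ih =>
      intro x hpair hval hcard
      have hex : ∃ l₀, x l₀ = 1 := by
        by_contra hno
        push_neg at hno
        have hpart := Finset.card_filter_add_card_filter_not
          (s := (univ : Finset (Fin (2*m)))) (p := fun j => x j = 2)
        rw [Finset.card_univ, Fintype.card_fin] at hpart
        have h02 : (univ.filter (fun j : Fin (2*m) => ¬ x j = 2)).card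
            = (univ.filter (fun j : Fin (2*m) => x j = 2)).card := by
          refine card_filter_rev _ _ (fun j => ?_)
          have hp := hpair j
          rcases hval j with h | h | h
          · constructor
            · intro _; linarith
            · intro _; rw [h]; norm_num
          · exact absurd h (hno j)
          · constructor
            · intro hc; exact absurd h hc
            · intro h2; exfalso; linarith
        omega
      obtain ⟨l₀, hl₀⟩ := hex
      have hl₀r : x l₀.rev = 1 := by have := hpair l₀; linarith
      have hne : l₀ ≠ l₀.rev := (rev_ne l₀).symm
      set dd : VecR m := fun l => (if l = l₀ then (1:ℝ) else 0) - (if l = l₀.rev then (1:ℝ) else 0)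
        with hdd
      have hdd1 : dd l₀ = 1 := by rw [hdd]; simp [hne]
      have hdd2 : dd l₀.rev = -1 := by rw [hdd]; simp [hne.symm]
      have hdd3 : ∀ l, l ≠ l₀ → l ≠ l₀.rev → dd l = 0 := by
        intro l h1 h2; rw [hdd]; simp [h1, h2]
      have hddpair : ∀ j, dd j + dd j.rev = 0 := by
        intro j
        by_cases h1 : j = l₀
        · rw [h1, hdd1, hdd2]; ring
        · by_cases h2 : j = l₀.rev
          · rw [h2, Fin.rev_rev, hdd1, hdd2]; ring
          · rw [hdd3 j h1 h2, hdd3 j.rev (fun h => h2 (by rw [← h, Fin.rev_rev]))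
              (fun h => h1 (rev_inj h))]
            ring
      have key : ∀ s : ℝ, s = 1 ∨ s = -1 →
          (fun l => x l + s * dd l) ∈ convexHull ℝ (OrbitMu m q) := by
        intro s hs
        refine ih _ (fun j => ?_) (fun j => ?_) ?_
        · show x j + s * dd j + (x j.rev + s * dd j.rev) = 2
          have hp1 := hpair j
          have hp2 := hddpair j
          linear_combination hp1 + s * hp2
        · by_cases h1 : j = l₀
          · rw [h1]
            show x l₀ + s * dd l₀ = 0 ∨ x l₀ + s * dd l₀ = 1 ∨ x l₀ + s * dd l₀ = 2
            rw [hdd1, hl₀]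
            rcases hs with rfl | rfl
            · right; right; norm_num
            · left; norm_num
          · by_cases h2 : j = l₀.rev
            · rw [h2]
              show x l₀.rev + s * dd l₀.rev = 0 ∨ x l₀.rev + s * dd l₀.rev = 1 ∨
                x l₀.rev + s * dd l₀.rev = 2
              rw [hdd2, hl₀r]
              rcases hs with rfl | rfl
              · left; norm_num
              · right; right; norm_num
            · show x j + s * dd j = 0 ∨ x j + s * dd j = 1 ∨ x j + s * dd j = 2
              rw [hdd3 j h1 h2, mul_zero, add_zero]
              exact hval j
        · have hfe : (univ.filter (fun j : Fin (2*m) => x j + s * dd j = 2))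
              = insert (if s = 1 then l₀ else l₀.rev)
                  (univ.filter (fun j : Fin (2*m) => x j = 2)) := by
            ext l
            simp only [mem_insert, mem_filter, mem_univ, true_and]
            by_cases h1 : l = l₀
            · rw [h1, hdd1, hl₀]
              rcases hs with rfl | rfl
              · rw [if_pos rfl]
                constructor
                · intro _; exact Or.inl rfl
                · intro _; norm_num
              · rw [if_neg (by norm_num : ¬ (-1:ℝ) = 1)]
                constructor
                · intro h; norm_num at h
                · rintro (h | h)
                  · exact absurd h.symm (rev_ne l₀)
                  · exfalso; norm_num at h
            · by_cases h2 : l = l₀.rev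
              · rw [h2, hdd2, hl₀r]
                rcases hs with rfl | rfl
                · rw [if_pos rfl]
                  constructor
                  · intro h; norm_num at h
                  · rintro (h | h)
                    · exact absurd h (rev_ne l₀)
                    · exfalso; norm_num at h
                · rw [if_neg (by norm_num : ¬ (-1:ℝ) = 1)]
                  constructor
                  · intro _; exact Or.inl rfl
                  · intro _; norm_num
              · rw [hdd3 l h1 h2, mul_zero, add_zero]
                constructor
                · intro h; exact Or.inr h
                · rintro (h | h)
                  · exfalso
                    rcases hs with rfl | rfl
                    · rw [if_pos rfl] at h; exact h1 h
                    · rw [if_neg (by norm_num : ¬ (-1:ℝ) = 1)] at h; exact h2 h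
                  · exact h
          rw [hfe, Finset.card_insert_of_notMem ?_]
          · omega
          · simp only [mem_filter, mem_univ, true_and]
            split_ifs
            · rw [hl₀]; norm_num
            · rw [hl₀r]; norm_num
      have h1 := key 1 (Or.inl rfl)
      have h2 := key (-1) (Or.inr rfl)
      have := (convex_convexHull ℝ (OrbitMu m q)) h1 h2 (by norm_num : (0:ℝ) ≤ 1/2)
        (by norm_num : (0:ℝ) ≤ 1/2) (by norm_num)
      convert this using 1
      funext l
      simp only [Pi.add_apply, Pi.smul_apply, smul_eq_mul]
      ring

end Hull


section Move
variable {m q : ℕ}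

noncomputable def sg (v : ℝ) : ℝ := if 1 < v then 1 else -1

noncomputable def dirD (i j : Fin (2*m)) (si sj : ℝ) : VecR m := fun l =>
  (if l = i then si else 0) + (if l = i.rev then -si else 0)
  + (if l = j then -sj else 0) + (if l = j.rev then sj else 0)

noncomputable def mv (x : VecR m) (i j : Fin (2*m)) : VecR m :=
  fun l => x l + (min (1 - |x i - 1|) (|x j - 1|)) * dirD i j (sg (x i)) (sg (x j)) l

lemma abs_up {v t : ℝ} (hv1 : v ≠ 1) (ht : 0 ≤ t) (ht' : t ≤ 1 - |v - 1|) :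
    |v + t * sg v - 1| = |v - 1| + t := by
  rcases lt_or_gt_of_ne hv1 with h | h
  · have e1 : |v - 1| = 1 - v := by rw [abs_of_nonpos (by linarith)]; ring
    rw [e1] at ht'
    rw [show sg v = -1 from if_neg (by linarith), e1, abs_of_nonpos (by nlinarith)]
    ring
  · have e1 : |v - 1| = v - 1 := abs_of_nonneg (by linarith)
    rw [e1] at ht'
    rw [show sg v = 1 from if_pos h, e1, abs_of_nonneg (by nlinarith)]
    ring

lemma abs_down {v t : ℝ} (ht : 0 ≤ t) (ht' : t ≤ |v - 1|) :
    |v - t * sg v - 1| = |v - 1| - t := by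
  rcases le_or_gt v 1 with h | h
  · have e1 : |v - 1| = 1 - v := by rw [abs_of_nonpos (by linarith)]; ring
    rw [e1] at ht'
    have hsg : sg v = -1 := if_neg (by linarith)
    rw [hsg, e1, abs_of_nonpos (by nlinarith)]
    ring
  · have e1 : |v - 1| = v - 1 := abs_of_nonneg (by linarith)
    rw [e1] at ht'
    have hsg : sg v = 1 := if_pos h
    rw [hsg, e1, abs_of_nonneg (by nlinarith)]
    ring

lemma box_of_abs {v : ℝ} (h : |v - 1| ≤ 1) : 0 ≤ v ∧ v ≤ 2 := by
  rw [abs_le] at h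
  constructor <;> linarith [h.1, h.2]

lemma abs_of_box {v : ℝ} (h0 : 0 ≤ v) (h2 : v ≤ 2) : |v - 1| ≤ 1 := by
  rw [abs_le]; constructor <;> linarith

lemma frac_abs {v : ℝ} (h0 : 0 ≤ v) (h2 : v ≤ 2) (hv : v ≠ 0 ∧ v ≠ 1 ∧ v ≠ 2) :
    0 < |v - 1| ∧ |v - 1| < 1 := by
  have hp : 0 < v := lt_of_le_of_ne h0 (Ne.symm hv.1)
  have hq2 : v < 2 := lt_of_le_of_ne h2 hv.2.2
  exact ⟨abs_pos.mpr (sub_ne_zero.mpr hv.2.1), abs_lt.mpr ⟨by linarith, by linarith⟩⟩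

lemma abs_one_cases {v : ℝ} (h : |v - 1| = 1) : v = 0 ∨ v = 2 := by
  rcases abs_cases (v - 1) with ⟨h1, _⟩ | ⟨h1, _⟩
  · right; linarith [h1.symm.trans h]
  · left; linarith [h1.symm.trans h]

lemma abs_rev_eq {x : VecR m} (hpair : ∀ l, x l + x l.rev = 2) (l : Fin (2*m)) :
    |x l.rev - 1| = |x l - 1| := by
  have := hpair l
  have e : x l.rev - 1 = -(x l - 1) := by linarith
  rw [e, abs_neg]

lemma sg_rev {x : VecR m} (hpair : ∀ l, x l + x l.rev = 2) (l : Fin (2*m)) (h1 : x l ≠ 1) :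
    sg (x l.rev) = - sg (x l) := by
  have hp := hpair l
  rcases lt_or_gt_of_ne h1 with h | h
  · rw [show sg (x l) = -1 from if_neg (by linarith), show sg (x l.rev) = 1 from if_pos (by linarith)]
    norm_num
  · rw [show sg (x l) = 1 from if_pos h, show sg (x l.rev) = -1 from if_neg (by linarith)]

lemma ite_rev_eq (l a : Fin (2*m)) (c : ℝ) :
    (if l.rev = a then c else 0) = (if l = a.rev then c else 0) := by
  congr 1
  rw [show (l.rev = a) = (l = a.rev) from propext
    ⟨fun h => by rw [← h, Fin.rev_rev], fun h => by rw [h, Fin.rev_rev]⟩]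

lemma ite_neg (c : Prop) [Decidable c] (a : ℝ) : (if c then -a else 0) = -(if c then a else 0) := by
  split_ifs <;> ring

lemma dirD_pair (i j : Fin (2*m)) (si sj : ℝ) (l : Fin (2*m)) :
    dirD i j si sj l + dirD i j si sj l.rev = 0 := by
  unfold dirD
  rw [ite_rev_eq l i si, ite_rev_eq l i.rev (-si), ite_rev_eq l j (-sj), ite_rev_eq l j.rev sj,
    Fin.rev_rev, Fin.rev_rev, ite_neg (l = i) si, ite_neg (l = i.rev) si, ite_neg (l = j) sj,
    ite_neg (l = j.rev) sj]
  ring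

lemma dirD_neg (i j : Fin (2*m)) (si sj : ℝ) (l : Fin (2*m)) :
    dirD j i sj si l = - dirD i j si sj l := by
  unfold dirD
  rw [ite_neg (l = i) si, ite_neg (l = i.rev) si, ite_neg (l = j) sj, ite_neg (l = j.rev) sj]
  ring

lemma move_step (x : VecR m) (hpair : ∀ l, x l + x l.rev = 2)
    (hbox : ∀ l, 0 ≤ x l ∧ x l ≤ 2)
    (i j : Fin (2*m)) (hi : x i ≠ 0 ∧ x i ≠ 1 ∧ x i ≠ 2) (hj : x j ≠ 0 ∧ x j ≠ 1 ∧ x j ≠ 2)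
    (hji : j ≠ i) (hjir : j ≠ i.rev) :
    0 < min (1 - |x i - 1|) (|x j - 1|) ∧
    (∀ l, mv x i j l + mv x i j l.rev = 2) ∧
    (∀ l, 0 ≤ mv x i j l ∧ mv x i j l ≤ 2) ∧
    (∑ l, |mv x i j l - 1|) = (∑ l, |x l - 1|) ∧
    (∀ l, mv x i j l ≠ x l → (l = i ∨ l = i.rev ∨ l = j ∨ l = j.rev)) ∧
    ((mv x i j i = 0 ∨ mv x i j i = 2) ∨ mv x i j j = 1) := by
  obtain ⟨hai0, hai1⟩ := frac_abs (hbox i).1 (hbox i).2 hi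
  obtain ⟨haj0, haj1⟩ := frac_abs (hbox j).1 (hbox j).2 hj
  set t := min (1 - |x i - 1|) (|x j - 1|) with hts
  have ht0 : 0 < t := lt_min (by linarith) haj0
  have htle1 : t ≤ 1 - |x i - 1| := min_le_left _ _
  have htle2 : t ≤ |x j - 1| := min_le_right _ _
  -- distinctness
  have dij : i ≠ j := hji.symm
  have dijr : i ≠ j.rev := fun h => hjir (by rw [← Fin.rev_rev j, ← h])
  have dirj : i.rev ≠ j := hjir.symm
  have dirjr : i.rev ≠ j.rev := fun h => dij (rev_inj h)
  set D := dirD i j (sg (x i)) (sg (x j)) with hD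
  have Di : D i = sg (x i) := by
    rw [hD]; unfold dirD
    rw [if_pos rfl, if_neg (rev_ne i).symm, if_neg dij, if_neg dijr]
    ring
  have Dir : D i.rev = - sg (x i) := by
    rw [hD]; unfold dirD
    rw [if_neg (rev_ne i), if_pos rfl, if_neg dirj, if_neg dirjr]
    ring
  have Dj : D j = - sg (x j) := by
    rw [hD]; unfold dirD
    rw [if_neg hji, if_neg hjir, if_pos rfl, if_neg (rev_ne j).symm]
    ring
  have Djr : D j.rev = sg (x j) := by
    rw [hD]; unfold dirD
    rw [if_neg (fun h => dijr h.symm), if_neg (fun h => dirjr h.symm), if_neg (rev_ne j),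
      if_pos rfl]
    ring
  have D0 : ∀ l, l ≠ i → l ≠ i.rev → l ≠ j → l ≠ j.rev → D l = 0 := by
    intro l h1 h2 h3 h4
    rw [hD]; unfold dirD
    rw [if_neg h1, if_neg h2, if_neg h3, if_neg h4]
    ring
  have hmv : ∀ l, mv x i j l = x l + t * D l := fun l => rfl
  -- abs values at the moved coordinates
  have habsi : |mv x i j i - 1| = |x i - 1| + t := by
    rw [hmv, Di, show x i + t * sg (x i) - 1 = x i + t * sg (x i) - 1 from rfl]
    exact abs_up hi.2.1 ht0.le htle1
  have habsir : |mv x i j i.rev - 1| = |x i - 1| + t := by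
    rw [hmv, Dir, show x i.rev + t * - sg (x i) = x i.rev + t * sg (x i.rev) by
      rw [sg_rev hpair i hi.2.1]]
    rw [← abs_rev_eq hpair i]
    refine abs_up ?_ ht0.le ?_
    · intro h
      have := hpair i
      rw [h] at this
      exact hi.2.1 (by linarith)
    · rw [abs_rev_eq hpair i]; exact htle1
  have habsj : |mv x i j j - 1| = |x j - 1| - t := by
    rw [hmv, Dj, show x j + t * - sg (x j) - 1 = x j - t * sg (x j) - 1 by ring]
    exact abs_down ht0.le htle2
  have habsjr : |mv x i j j.rev - 1| = |x j - 1| - t := by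
    rw [hmv, Djr, show x j.rev + t * sg (x j) = x j.rev - t * sg (x j.rev) by
      rw [sg_rev hpair j hj.2.1]; ring]
    rw [← abs_rev_eq hpair j]
    refine abs_down ht0.le ?_
    rw [abs_rev_eq hpair j]; exact htle2
  have habs0 : ∀ l, l ≠ i → l ≠ i.rev → l ≠ j → l ≠ j.rev → mv x i j l = x l := by
    intro l h1 h2 h3 h4
    rw [hmv, D0 l h1 h2 h3 h4]
    ring
  refine ⟨ht0, ?_, ?_, ?_, ?_, ?_⟩
  · intro l
    have h1 := hpair l
    have h2 := dirD_pair i j (sg (x i)) (sg (x j)) l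
    rw [← hD] at h2
    rw [hmv, hmv]
    linear_combination h1 + t * h2
  · intro l
    by_cases h1 : l = i
    · rw [h1]; exact box_of_abs (by rw [habsi]; linarith)
    · by_cases h2 : l = i.rev
      · rw [h2]; exact box_of_abs (by rw [habsir]; linarith)
      · by_cases h3 : l = j
        · rw [h3]
          refine box_of_abs ?_
          rw [habsj]
          have := abs_of_box (hbox j).1 (hbox j).2
          linarith
        · by_cases h4 : l = j.rev
          · rw [h4]
            refine box_of_abs ?_
            rw [habsjr]
            have := abs_of_box (hbox j).1 (hbox j).2
            linarith
          · rw [habs0 l h1 h2 h3 h4]; exact hbox l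
  · have hpt : ∀ l, |mv x i j l - 1| = |x l - 1|
        + ((if l = i then t else 0) + (if l = i.rev then t else 0)
          - (if l = j then t else 0) - (if l = j.rev then t else 0)) := by
      intro l
      by_cases h1 : l = i
      · rw [h1, habsi, if_pos rfl, if_neg (rev_ne i).symm, if_neg dij, if_neg dijr]
        ring
      · by_cases h2 : l = i.rev
        · rw [h2, habsir, ← abs_rev_eq hpair i, if_neg (rev_ne i), if_pos rfl, if_neg dirj,
            if_neg dirjr, abs_rev_eq hpair i]
          ring
        · by_cases h3 : l = j
          · rw [h3, habsj, if_neg hji, if_neg hjir, if_pos rfl, if_neg (rev_ne j).symm]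
            ring
          · by_cases h4 : l = j.rev
            · rw [h4, habsjr, ← abs_rev_eq hpair j, if_neg (fun h => dijr h.symm),
                if_neg (fun h => dirjr h.symm), if_neg (rev_ne j), if_pos rfl,
                abs_rev_eq hpair j]
              ring
            · rw [habs0 l h1 h2 h3 h4, if_neg h1, if_neg h2, if_neg h3, if_neg h4]
              ring
    rw [Finset.sum_congr rfl (fun l _ => hpt l)]
    have hs1 : ∀ (a : Fin (2*m)), ∑ l : Fin (2*m), (if l = a then t else 0) = t := by
      intro a
      rw [Finset.sum_ite_eq' univ a (fun _ => t), if_pos (mem_univ a)]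
    have expand : ∀ l : Fin (2*m), |x l - 1|
        + ((if l = i then t else 0) + (if l = i.rev then t else 0)
          - (if l = j then t else 0) - (if l = j.rev then t else 0))
        = |x l - 1| + (if l = i then t else 0) + (if l = i.rev then t else 0)
          - (if l = j then t else 0) - (if l = j.rev then t else 0) := by
      intro l; ring
    rw [Finset.sum_congr rfl (fun l _ => expand l)]
    rw [Finset.sum_sub_distrib, Finset.sum_sub_distrib, Finset.sum_add_distrib,
      Finset.sum_add_distrib, hs1 i, hs1 i.rev, hs1 j, hs1 j.rev]
    ring
  · intro l hl
    by_contra hcon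
    push_neg at hcon
    exact hl (habs0 l hcon.1 hcon.2.1 hcon.2.2.1 hcon.2.2.2)
  · rcases min_cases (1 - |x i - 1|) (|x j - 1|) with ⟨he, _⟩ | ⟨he, _⟩
    · left
      refine abs_one_cases ?_
      rw [habsi, hts, he]
      ring
    · right
      have : |mv x i j j - 1| = 0 := by rw [habsj, hts, he]; ring
      have := abs_eq_zero.mp this
      linarith

end Move


section MainHull
variable {m q : ℕ}

lemma int_case_sum (hm : 2 ≤ m) (hq : q ≤ m - 1) (x : VecR m)
    (hpair : ∀ j, x j + x j.rev = 2) (hval : ∀ j, x j = 0 ∨ x j = 1 ∨ x j = 2)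
    (hsum : ∑ j, |x j - 1| ≤ 2*q) : x ∈ convexHull ℝ (OrbitMu m q) := by
  classical
  have hpt : ∀ j, |x j - 1| = (if x j = 2 then (1:ℝ) else 0) + (if x j = 0 then (1:ℝ) else 0) := by
    intro j
    rcases hval j with h | h | h <;> rw [h] <;> norm_num
  have hsum2 : ∑ j, |x j - 1| = ((univ.filter (fun j : Fin (2*m) => x j = 2)).card : ℝ)
      + ((univ.filter (fun j : Fin (2*m) => x j = 0)).card : ℝ) := by
    rw [Finset.sum_congr rfl (fun j _ => hpt j), Finset.sum_add_distrib, Finset.sum_boole,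
      Finset.sum_boole]
  have h02 : (univ.filter (fun j : Fin (2*m) => x j = 0)).card
      = (univ.filter (fun j : Fin (2*m) => x j = 2)).card := by
    refine card_filter_rev _ _ (fun j => ?_)
    have := hpair j
    constructor <;> intro h <;> linarith
  have hc : (univ.filter (fun j : Fin (2*m) => x j = 2)).card ≤ q := by
    rw [hsum2, h02] at hsum
    have : (((univ.filter (fun j : Fin (2*m) => x j = 2)).card : ℝ)) ≤ q := by linarith
    exact_mod_cast this
  exact int_mem_hull hm hq (q - (univ.filter (fun j : Fin (2*m) => x j = 2)).card) x hpair hval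
    (by omega)

lemma hull_main (hm : 2 ≤ m) (hq : q ≤ m - 1) :
    ∀ (n : ℕ) (x : VecR m),
      (univ.filter (fun j : Fin (2*m) => x j ≠ 0 ∧ x j ≠ 1 ∧ x j ≠ 2)).card ≤ n →
      (∀ j, x j + x j.rev = 2) → (∀ j, 0 ≤ x j ∧ x j ≤ 2) →
      ∑ j, |x j - 1| ≤ 2*q → x ∈ convexHull ℝ (OrbitMu m q) := by
  classical
  intro n
  induction n with
  | zero =>
      intro x hcard hpair hbox hsum
      refine int_case_sum hm hq x hpair (fun j => ?_) hsum
      by_contra hcon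
      push_neg at hcon
      have hmem : j ∈ univ.filter (fun j : Fin (2*m) => x j ≠ 0 ∧ x j ≠ 1 ∧ x j ≠ 2) :=
        mem_filter.mpr ⟨mem_univ _, hcon.1, hcon.2.1, hcon.2.2⟩
      rw [Finset.card_eq_zero.mp (Nat.le_zero.mp hcard)] at hmem
      exact absurd hmem (Finset.notMem_empty j)
  | succ n ih =>
      intro x hcard hpair hbox hsum
      set F := univ.filter (fun j : Fin (2*m) => x j ≠ 0 ∧ x j ≠ 1 ∧ x j ≠ 2) with hF
      by_cases h0 : F.card = 0
      · refine int_case_sum hm hq x hpair (fun j => ?_) hsum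
        by_contra hcon
        push_neg at hcon
        have hmem : j ∈ F := mem_filter.mpr ⟨mem_univ _, hcon.1, hcon.2.1, hcon.2.2⟩
        rw [Finset.card_eq_zero.mp h0] at hmem
        exact absurd hmem (Finset.notMem_empty j)
      · obtain ⟨i, hiF⟩ := Finset.card_pos.mp (Nat.pos_of_ne_zero h0)
        have hi : x i ≠ 0 ∧ x i ≠ 1 ∧ x i ≠ 2 := by
          have := mem_filter.mp hiF
          exact this.2
        have hrev_frac : ∀ l : Fin (2*m), (x l ≠ 0 ∧ x l ≠ 1 ∧ x l ≠ 2) → l.rev ∈ F := by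
          intro l hl
          have hxr : x l.rev = 2 - x l := by have := hpair l; linarith
          refine mem_filter.mpr ⟨mem_univ _, ?_, ?_, ?_⟩ <;> rw [hxr] <;> intro h
          · exact hl.2.2 (by linarith)
          · exact hl.2.1 (by linarith)
          · exact hl.1 (by linarith)
        have hirF : i.rev ∈ F := hrev_frac i hi
        by_cases hjcase : ((F.erase i).erase i.rev).Nonempty
        · obtain ⟨j, hjmem⟩ := hjcase
          have hjir : j ≠ i.rev := (Finset.mem_erase.mp hjmem).1
          have hji : j ≠ i := (Finset.mem_erase.mp (Finset.mem_erase.mp hjmem).2).1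
          have hjF : j ∈ F := (Finset.mem_erase.mp (Finset.mem_erase.mp hjmem).2).2
          have hjv : x j ≠ 0 ∧ x j ≠ 1 ∧ x j ≠ 2 := (mem_filter.mp hjF).2
          have hij : i ≠ j := hji.symm
          have hijr : i ≠ j.rev := fun h => hjir (by rw [h, Fin.rev_rev])
          obtain ⟨ht1, hp1, hb1, hs1, hm1, hd1⟩ := move_step x hpair hbox i j hi hjv hji hjir
          obtain ⟨ht2, hp2, hb2, hs2, hm2, hd2⟩ := move_step x hpair hbox j i hjv hi hij hijr
          have hjrF : j.rev ∈ F := hrev_frac j hjv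
          -- subset lemma for both moved vectors
          have hsub : ∀ y : VecR m, (∀ l, y l ≠ x l → (l = i ∨ l = i.rev ∨ l = j ∨ l = j.rev)) →
              (univ.filter (fun l : Fin (2*m) => y l ≠ 0 ∧ y l ≠ 1 ∧ y l ≠ 2)) ⊆ F := by
            intro y hmov l hl
            have hl' := (mem_filter.mp hl).2
            by_cases hxl : y l = x l
            · rw [hxl] at hl'
              exact mem_filter.mpr ⟨mem_univ _, hl'⟩
            · rcases hmov l hxl with rfl | rfl | rfl | rfl
              · exact hiF
              · exact hirF
              · exact hjF
              · exact hjrF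
          have hcard1 : (univ.filter (fun l : Fin (2*m) =>
              mv x i j l ≠ 0 ∧ mv x i j l ≠ 1 ∧ mv x i j l ≠ 2)).card ≤ n := by
            have hss : (univ.filter (fun l : Fin (2*m) =>
                mv x i j l ≠ 0 ∧ mv x i j l ≠ 1 ∧ mv x i j l ≠ 2)) ⊂ F := by
              refine (Finset.ssubset_iff_of_subset (hsub _ hm1)).mpr ?_
              rcases hd1 with h | h
              · refine ⟨i, hiF, fun hmem => ?_⟩
                have := (mem_filter.mp hmem).2
                rcases h with h | h
                · exact this.1 h
                · exact this.2.2 h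
              · refine ⟨j, hjF, fun hmem => ?_⟩
                exact (mem_filter.mp hmem).2.2.1 h
            have := Finset.card_lt_card hss
            omega
          have hcard2 : (univ.filter (fun l : Fin (2*m) =>
              mv x j i l ≠ 0 ∧ mv x j i l ≠ 1 ∧ mv x j i l ≠ 2)).card ≤ n := by
            have hss : (univ.filter (fun l : Fin (2*m) =>
                mv x j i l ≠ 0 ∧ mv x j i l ≠ 1 ∧ mv x j i l ≠ 2)) ⊂ F := by
              refine (Finset.ssubset_iff_of_subset (hsub _ (fun l hl => ?_))).mpr ?_
              · rcases hm2 l hl with rfl | rfl | rfl | rfl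
                · exact Or.inr (Or.inr (Or.inl rfl))
                · exact Or.inr (Or.inr (Or.inr rfl))
                · exact Or.inl rfl
                · exact Or.inr (Or.inl rfl)
              · rcases hd2 with h | h
                · refine ⟨j, hjF, fun hmem => ?_⟩
                  have := (mem_filter.mp hmem).2
                  rcases h with h | h
                  · exact this.1 h
                  · exact this.2.2 h
                · refine ⟨i, hiF, fun hmem => ?_⟩
                  exact (mem_filter.mp hmem).2.2.1 h
            have := Finset.card_lt_card hss
            omega
          have hmem1 := ih (mv x i j) hcard1 hp1 hb1 (by rw [hs1]; exact hsum)
          have hmem2 := ih (mv x j i) hcard2 hp2 hb2 (by rw [hs2]; exact hsum)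
          set t1 := min (1 - |x i - 1|) (|x j - 1|) with ht1d
          set t2 := min (1 - |x j - 1|) (|x i - 1|) with ht2d
          have htt : 0 < t1 + t2 := by linarith
          have hcomb : (t2/(t1+t2)) • mv x i j + (t1/(t1+t2)) • mv x j i = x := by
            funext l
            simp only [Pi.add_apply, Pi.smul_apply, smul_eq_mul]
            have e1 : mv x i j l = x l + t1 * dirD i j (sg (x i)) (sg (x j)) l := rfl
            have e2 : mv x j i l = x l + t2 * dirD j i (sg (x j)) (sg (x i)) l := rfl
            rw [e1, e2, dirD_neg]
            field_simp
            ring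
          have := (convex_convexHull ℝ (OrbitMu m q)) hmem1 hmem2
            (le_of_lt (by positivity : (0:ℝ) < t2/(t1+t2)))
            (le_of_lt (by positivity : (0:ℝ) < t1/(t1+t2)))
            (by field_simp; ring)
          rwa [hcomb] at this
        · -- F = {i, i.rev} : the two-coordinate case
          have hmem2 : ∀ l, l ≠ i → l ≠ i.rev → (x l = 0 ∨ x l = 1 ∨ x l = 2) := by
            intro l h1 h2
            by_contra hcon
            push_neg at hcon
            have hlF : l ∈ F := mem_filter.mpr ⟨mem_univ _, hcon.1, hcon.2.1, hcon.2.2⟩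
            exact hjcase ⟨l, Finset.mem_erase.mpr ⟨h2, Finset.mem_erase.mpr ⟨h1, hlF⟩⟩⟩
          obtain ⟨hai0, hai1⟩ := frac_abs (hbox i).1 (hbox i).2 hi
          set ai := |x i - 1| with hai
          set si := sg (x i) with hsi
          set d0 : VecR m := fun l => (if l = i then si else 0) + (if l = i.rev then -si else 0)
            with hd0
          have d0i : d0 i = si := by rw [hd0]; simp [(rev_ne i).symm]
          have d0ir : d0 i.rev = -si := by rw [hd0]; simp [rev_ne i]
          have d00 : ∀ l, l ≠ i → l ≠ i.rev → d0 l = 0 := by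
            intro l h1 h2; rw [hd0]; simp [h1, h2]
          have hd0pair : ∀ l, d0 l + d0 l.rev = 0 := by
            intro l
            by_cases h1 : l = i
            · rw [h1, d0i, d0ir]; ring
            · by_cases h2 : l = i.rev
              · rw [h2, Fin.rev_rev, d0i, d0ir]; ring
              · rw [d00 l h1 h2, d00 l.rev (fun h => h2 (by rw [← h, Fin.rev_rev]))
                  (fun h => h1 (rev_inj h))]
                ring
          have hxirne : x i.rev ≠ 1 := by
            intro h
            have := hpair i
            exact hi.2.1 (by linarith)
          have hrevabs : |x i.rev - 1| = ai := by rw [abs_rev_eq hpair i]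
          -- endpoints
          set y1 : VecR m := fun l => x l + (1 - ai) * d0 l with hy1
          set y0 : VecR m := fun l => x l - ai * d0 l with hy0
          have hy1i : |y1 i - 1| = 1 := by
            rw [hy1]
            simp only []
            rw [d0i, hsi]
            rw [show x i + (1 - ai) * sg (x i) = x i + (1 - ai) * sg (x i) from rfl]
            rw [abs_up hi.2.1 (by linarith) (by rw [← hai])]
            rw [← hai]; ring
          have hy1ir : |y1 i.rev - 1| = 1 := by
            rw [hy1]
            simp only []
            rw [d0ir, hsi, show x i.rev + (1 - ai) * -sg (x i) = x i.rev + (1 - ai) * sg (x i.rev) by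
              rw [sg_rev hpair i hi.2.1]]
            rw [abs_up hxirne (by linarith) (by rw [hrevabs])]
            rw [hrevabs]; ring
          have hy0i : y1 i = 0 ∨ y1 i = 2 := abs_one_cases hy1i
          have hy0ir : y1 i.rev = 0 ∨ y1 i.rev = 2 := abs_one_cases hy1ir
          have hz0i : y0 i = 1 := by
            have : |y0 i - 1| = 0 := by
              rw [hy0]
              simp only []
              rw [d0i, hsi, abs_down (by linarith) (le_of_eq hai)]
              rw [← hai]; ring
            have := abs_eq_zero.mp this
            linarith
          have hz0ir : y0 i.rev = 1 := by
            have : |y0 i.rev - 1| = 0 := by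
              rw [hy0]
              simp only []
              rw [d0ir, hsi, show x i.rev - ai * -sg (x i) = x i.rev - ai * sg (x i.rev) by
                rw [sg_rev hpair i hi.2.1]]
              rw [abs_down (by linarith) (by rw [hrevabs])]
              rw [hrevabs]; ring
            have := abs_eq_zero.mp this
            linarith
          have hyother : ∀ (c : ℝ) l, l ≠ i → l ≠ i.rev → x l + c * d0 l = x l := by
            intro c l h1 h2
            rw [d00 l h1 h2]; ring
          -- pairing for both
          have hp1 : ∀ l, y1 l + y1 l.rev = 2 := by
            intro l
            have h1 := hpair l
            have h2 := hd0pair l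
            rw [hy1]
            simp only []
            linear_combination h1 + (1 - ai) * h2
          have hp0 : ∀ l, y0 l + y0 l.rev = 2 := by
            intro l
            have h1 := hpair l
            have h2 := hd0pair l
            rw [hy0]
            simp only []
            linear_combination h1 - ai * h2
          -- integer values for both
          have hval1 : ∀ l, y1 l = 0 ∨ y1 l = 1 ∨ y1 l = 2 := by
            intro l
            by_cases h1 : l = i
            · rw [h1]; rcases hy0i with h | h
              · exact Or.inl h
              · exact Or.inr (Or.inr h)
            · by_cases h2 : l = i.rev
              · rw [h2]; rcases hy0ir with h | h
                · exact Or.inl h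
                · exact Or.inr (Or.inr h)
              · rw [hy1]
                simp only []
                rw [hyother _ l h1 h2]
                exact hmem2 l h1 h2
          have hval0 : ∀ l, y0 l = 0 ∨ y0 l = 1 ∨ y0 l = 2 := by
            intro l
            by_cases h1 : l = i
            · rw [h1, hz0i]; exact Or.inr (Or.inl rfl)
            · by_cases h2 : l = i.rev
              · rw [h2, hz0ir]; exact Or.inr (Or.inl rfl)
              · rw [hy0]
                simp only []
                rw [show x l - ai * d0 l = x l + (-ai) * d0 l by ring, hyother _ l h1 h2]
                exact hmem2 l h1 h2
          -- sums
          have hsplit : ∀ y : VecR m, ∑ l, |y l - 1|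
              = |y i - 1| + |y i.rev - 1| + ∑ l ∈ (univ.erase i).erase i.rev, |y l - 1| := by
            intro y
            rw [← Finset.add_sum_erase univ _ (mem_univ i),
              ← Finset.add_sum_erase (univ.erase i) _
                (Finset.mem_erase.mpr ⟨rev_ne i, mem_univ _⟩)]
            ring
          have hrest_eq : ∀ (y : VecR m), (∀ l, l ≠ i → l ≠ i.rev → y l = x l) →
              ∑ l ∈ (univ.erase i).erase i.rev, |y l - 1|
                = ∑ l ∈ (univ.erase i).erase i.rev, |x l - 1| := by
            intro y hy
            refine Finset.sum_congr rfl (fun l hl => ?_)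
            have h2 := (Finset.mem_erase.mp hl).1
            have h1 := (Finset.mem_erase.mp (Finset.mem_erase.mp hl).2).1
            rw [hy l h1 h2]
          set N := ((univ.erase i).erase i.rev).filter
            (fun l : Fin (2*m) => x l = 0 ∨ x l = 2) with hN
          have hrestN : ∑ l ∈ (univ.erase i).erase i.rev, |x l - 1| = (N.card : ℝ) := by
            rw [hN]
            rw [show ∑ l ∈ (univ.erase i).erase i.rev, |x l - 1|
              = ∑ l ∈ (univ.erase i).erase i.rev,
                (if x l = 0 ∨ x l = 2 then (1:ℝ) else 0) from ?_, Finset.sum_boole]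
            refine Finset.sum_congr rfl (fun l hl => ?_)
            have h2 := (Finset.mem_erase.mp hl).1
            have h1 := (Finset.mem_erase.mp (Finset.mem_erase.mp hl).2).1
            rcases hmem2 l h1 h2 with h | h | h <;> rw [h] <;> norm_num
          have hNeven : Even N.card := by
            have hNeq : N = univ.filter
                (fun l : Fin (2*m) => (¬ l = i.rev ∧ ¬ l = i) ∧ (x l = 0 ∨ x l = 2)) := by
              rw [hN]
              ext l
              constructor
              · intro hl
                obtain ⟨hmem, hP⟩ := Finset.mem_filter.mp hl
                have h2 := (Finset.mem_erase.mp hmem).1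
                have h1 := (Finset.mem_erase.mp (Finset.mem_erase.mp hmem).2).1
                exact Finset.mem_filter.mpr ⟨mem_univ _, ⟨h2, h1⟩, hP⟩
              · intro hl
                obtain ⟨_, ⟨h2, h1⟩, hP⟩ := Finset.mem_filter.mp hl
                exact Finset.mem_filter.mpr ⟨Finset.mem_erase.mpr
                  ⟨h2, Finset.mem_erase.mpr ⟨h1, mem_univ _⟩⟩, hP⟩
            rw [hNeq]
            refine even_card_rev_stable _ (fun l => ?_)
            have hp := hpair l
            constructor
            · rintro ⟨⟨ha, hb⟩, hc⟩
              refine ⟨⟨fun h => hb (rev_inj h), fun h => ha (by rw [← h, Fin.rev_rev])⟩, ?_⟩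
              rcases hc with h | h
              · right; linarith
              · left; linarith
            · rintro ⟨⟨ha, hb⟩, hc⟩
              refine ⟨⟨fun h => hb (by rw [h, Fin.rev_rev]), fun h => ha (by rw [h])⟩, ?_⟩
              rcases hc with h | h
              · right; linarith
              · left; linarith
          have hxsum : ∑ l, |x l - 1| = 2*ai + (N.card : ℝ) := by
            rw [hsplit x, hrevabs, hrestN, ← hai]
            ring
          have hNle : (N.card : ℝ) + 2*ai ≤ 2*q := by rw [hxsum] at hsum; linarith
          have hNlt : N.card < 2*q := by
            have : (N.card : ℝ) < 2*q := by linarith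
            exact_mod_cast this
          have hN2 : N.card + 2 ≤ 2*q := by
            obtain ⟨r, hr⟩ := hNeven
            omega
          have hsum1 : ∑ l, |y1 l - 1| ≤ 2*q := by
            rw [hsplit y1, hy1i, hy1ir,
              hrest_eq y1 (fun l h1 h2 => by rw [hy1]; simp only []; exact hyother _ l h1 h2),
              hrestN]
            have : ((N.card : ℝ) + 2) ≤ 2*q := by exact_mod_cast hN2
            linarith
          have hsum0 : ∑ l, |y0 l - 1| ≤ 2*q := by
            rw [hsplit y0, hz0i, hz0ir,
              hrest_eq y0 (fun l h1 h2 => by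
                rw [hy0]
                simp only []
                rw [show x l - ai * d0 l = x l + (-ai) * d0 l by ring]
                exact hyother _ l h1 h2),
              hrestN]
            norm_num
            linarith
          have hin1 := int_case_sum hm hq y1 hp1 hval1 hsum1
          have hin0 := int_case_sum hm hq y0 hp0 hval0 hsum0
          have hcomb : ai • y1 + (1 - ai) • y0 = x := by
            funext l
            simp only [Pi.add_apply, Pi.smul_apply, smul_eq_mul]
            rw [hy1, hy0]
            simp only []
            ring
          have := (convex_convexHull ℝ (OrbitMu m q)) hin1 hin0 (le_of_lt hai0)
            (show (0:ℝ) ≤ 1 - ai by linarith) (show ai + (1 - ai) = 1 by ring)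
          rwa [hcomb] at this

end MainHull


theorem statement10 (m q : ℕ) (hm : 2 ≤ m) (hq : q ≤ m - 1)
    (t : VecZ m) (σ : Equiv.Perm (Fin (2 * m))) (ht : InXD m t) (hσ : InSO m σ)
    (k : ℕ) (hk : k ≤ m) :
    (SP1' m t σ (k : ℤ) ∧ SP2' m q t σ (k : ℤ)) ↔ nuD m t σ (k : ℤ) ∈ ConvMu m q := by
  classical
  have hq2 : q ≤ m := by omega
  have hm1 : 1 ≤ m := by omega
  have hrep : ∀ j, nuD m t σ (k:ℤ) j
      = ((muD m t σ (k:ℤ) j + muD m t σ (-(k:ℤ)) j : ℤ):ℝ)/2 := fun j => rfl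
  have hval5 : (∀ j, 0 ≤ nuD m t σ (k:ℤ) j ∧ nuD m t σ (k:ℤ) j ≤ 2) →
      ∀ j, nuD m t σ (k:ℤ) j = 0 ∨ nuD m t σ (k:ℤ) j = 1/2 ∨ nuD m t σ (k:ℤ) j = 1
        ∨ nuD m t σ (k:ℤ) j = 3/2 ∨ nuD m t σ (k:ℤ) j = 2 := by
    intro hbox j
    have h0 := (hbox j).1
    have h2 := (hbox j).2
    rw [hrep j] at h0 h2 ⊢
    exact classify_half _ h0 h2
  have hnc2 : Set.ncard {j : Fin (2*m) | nuD m t σ (k:ℤ) j = 2}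
      = (univ.filter (fun j : Fin (2*m) => nuD m t σ (k:ℤ) j = 2)).card := ncard_setOf _
  have hncH : Set.ncard {j : Fin (2*m) | ¬ IsIntVal (nuD m t σ (k:ℤ) j)}
      = (univ.filter (fun j : Fin (2*m) => ¬ IsIntVal (nuD m t σ (k:ℤ) j))).card := ncard_setOf _
  constructor
  · intro h
    obtain ⟨h1, h2⟩ := h
    unfold SP1' at h1
    unfold SP2' at h2
    obtain ⟨hpairSP, hboxSP⟩ := h1
    have hval := hval5 hboxSP
    have hsum : ∑ j, |nuD m t σ (k:ℤ) j - 1| ≤ 2*q := by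
      rw [sum_abs_eq _ hpairSP hval]
      rw [hnc2, hncH] at h2
      linarith
    exact hull_main hm hq _ (nuD m t σ (k:ℤ)) le_rfl hpairSP hboxSP hsum
  · intro hx
    have h' := convMu_subset hq2 hm1 hx
    simp only [Set.mem_setOf_eq] at h'
    obtain ⟨hpairC, hboxC, hsumC⟩ := h'
    constructor
    · unfold SP1'
      exact ⟨hpairC, hboxC⟩
    · unfold SP2'
      rw [hnc2, hncH]
      rw [sum_abs_eq _ hpairC (hval5 hboxC)] at hsumC
      linarith

end TypeD
end

section
/- Let w = t_v σ ∈ W̃_{D_m} and j ∈ {1,…,2m}. Then exactly one of the following three possibilities holds: (1) σ(j) = j, and k ↦ ν_k^w(j) is constant as k varies in 0 ≤ k ≤ m; (2) σ(j) = j*, the set of values of ν_k^w(j) for 0 ≤ k ≤ m is exactly {u(j), u(j)−1}, and there is exactly one k with 1 ≤ k ≤ m such that ν_k^w(j) ≠ ν_{k−1}^w(j), namely k = min{j, j*}; (3) σ(j) ∉ {j, j*}, ν_k^w(j) = u(j) − 1/2 for some k with 0 ≤ k ≤ m, there are exactly two values of k with 1 ≤ k ≤ m such that ν_k^w(j) ≠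 ν_{k−1}^w(j), namely k = min{j, j*} and k = min{σ⁻¹(j), σ⁻¹(j)*}, and for each such k, |ν_k^w(j) − ν_{k−1}^w(j)| = 1/2. -/
open Finset

namespace TypeD

/-- Possibility (1): `j` is not proper. -/
def Case1 (m : ℕ) (t : VecZ m) (σ : Equiv.Perm (Fin (2 * m))) (j : Fin (2 * m)) : Prop :=
  σ j = j ∧ ∀ k k' : ℕ, k ≤ m → k' ≤ m → nuD m t σ (k : ℤ) j = nuD m t σ (k' : ℤ) j

/-- Possibility (2): `σ(j) = j*`. -/
def Case2 (m : ℕ) (t : VecZ m) (σ : Equiv.Perm (Fin (2 * m))) (u : Fin (2 * m) → ℤ)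
    (j : Fin (2 * m)) : Prop :=
  σ j = j.rev ∧
  {x : ℝ | ∃ k : ℕ, k ≤ m ∧ x = nuD m t σ (k : ℤ) j} = {(u j : ℝ), (u j : ℝ) - 1} ∧
  ∀ k : ℕ, 1 ≤ k → k ≤ m →
    (nuD m t σ (k : ℤ) j ≠ nuD m t σ ((k : ℤ) - 1) j ↔
      k = min ((j : ℕ) + 1) ((j.rev : ℕ) + 1))

/-- Possibility (3): `σ(j) ∉ {j, j*}`. -/
def Case3 (m : ℕ) (t : VecZ m) (σ : Equiv.Perm (Fin (2 * m))) (u : Fin (2 * m) → ℤ)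
    (j : Fin (2 * m)) : Prop :=
  σ j ≠ j ∧ σ j ≠ j.rev ∧
  (∃ k : ℕ, k ≤ m ∧ nuD m t σ (k : ℤ) j = (u j : ℝ) - 1 / 2) ∧
  min ((j : ℕ) + 1) ((j.rev : ℕ) + 1) ≠
    min (((σ⁻¹ j : Fin (2 * m)) : ℕ) + 1) ((((σ⁻¹ j).rev : Fin (2 * m)) : ℕ) + 1) ∧
  (∀ k : ℕ, 1 ≤ k → k ≤ m →
    (nuD m t σ (k : ℤ) j ≠ nuD m t σ ((k : ℤ) - 1) j ↔
      (k = min ((j : ℕ) + 1) ((j.rev : ℕ) + 1) ∨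
        k = min (((σ⁻¹ j : Fin (2 * m)) : ℕ) + 1)
          ((((σ⁻¹ j).rev : Fin (2 * m)) : ℕ) + 1)))) ∧
  (∀ k : ℕ, 1 ≤ k → k ≤ m → nuD m t σ (k : ℤ) j ≠ nuD m t σ ((k : ℤ) - 1) j →
    |nuD m t σ (k : ℤ) j - nuD m t σ ((k : ℤ) - 1) j| = 1 / 2)

private def hh (m x k : ℕ) : ℤ :=
  if x < k then -1 else if 2 * m - k ≤ x then 1 else 0

private lemma omegaA (m : ℕ) (hm : 0 < m) (l : ℕ) (hl : l ≤ 2 * m) (x : Fin (2 * m)) :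
    omegaD m (l : ℤ) x = if (x : ℕ) < l then -1 else 0 := by
  have hx := x.isLt
  unfold omegaD
  rcases eq_or_lt_of_le hl with rfl | hl'
  · have h2 : ((2 * m : ℕ) : ℤ) = 2 * (m : ℤ) := by push_cast; ring
    rw [h2, Int.emod_self, Int.ediv_self (by omega : 2 * (m : ℤ) ≠ 0)]
    split_ifs <;> omega
  · have h1 : (l : ℤ) % (2 * (m : ℤ)) = (l : ℤ) :=
      Int.emod_eq_of_lt (by omega) (by omega)
    have h2 : (l : ℤ) / (2 * (m : ℤ)) = 0 :=
      Int.ediv_eq_zero_of_lt (by omega) (by omega)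
    rw [h1, h2]
    split_ifs <;> omega

private lemma omegaC (m : ℕ) (hm : 0 < m) (k : ℕ) (hk1 : 1 ≤ k) (hk : k ≤ m)
    (x : Fin (2 * m)) :
    omegaD m (-(k : ℤ)) x = if 2 * m - k ≤ (x : ℕ) then 1 else 0 := by
  have hx := x.isLt
  have key : -(k : ℤ) = (2 * (m : ℤ) - k) + (2 * (m : ℤ)) * (-1) := by ring
  have h1 : -(k : ℤ) % (2 * (m : ℤ)) = 2 * (m : ℤ) - k := by
    rw [key, Int.add_mul_emod_self_left]
    exact Int.emod_eq_of_lt (by omega) (by omega)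
  have h2 : -(k : ℤ) / (2 * (m : ℤ)) = -1 := by
    rw [key, Int.add_mul_ediv_left _ (-1) (by omega : 2 * (m : ℤ) ≠ 0),
      Int.ediv_eq_zero_of_lt (by omega) (by omega)]
    norm_num
  unfold omegaD
  rw [h1, h2]
  split_ifs <;> omega

private lemma omega_pair (m : ℕ) (hm : 0 < m) (k : ℕ) (hk : k ≤ m) (x : Fin (2 * m)) :
    omegaD m (k : ℤ) x + omegaD m (-(k : ℤ)) x = hh m (x : ℕ) k := by
  have hx := x.isLt
  rcases Nat.eq_zero_or_pos k with rfl | hk1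
  · rw [show (-(((0 : ℕ) : ℤ))) = (((0 : ℕ) : ℤ)) by norm_num,
      omegaA m hm 0 (by omega) x]
    unfold hh
    split_ifs <;> omega
  · rw [omegaA m hm k (by omega) x, omegaC m hm k hk1 hk x]
    unfold hh
    split_ifs <;> omega

private lemma nu_eq (m : ℕ) (hm : 0 < m) (t : VecZ m) (σ : Equiv.Perm (Fin (2 * m)))
    (k : ℕ) (hk : k ≤ m) (j : Fin (2 * m)) :
    nuD m t σ (k : ℤ) j =
      ((2 * t j + hh m ((σ⁻¹ j : Fin (2 * m)) : ℕ) k - hh m ((j : ℕ)) k : ℤ) : ℝ) / 2 := by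
  have key : muD m t σ (k : ℤ) j + muD m t σ (-(k : ℤ)) j
      = 2 * t j + hh m ((σ⁻¹ j : Fin (2 * m)) : ℕ) k - hh m ((j : ℕ)) k := by
    unfold muD
    rw [← omega_pair m hm k hk (σ⁻¹ j), ← omega_pair m hm k hk j]
    ring
  unfold nuD
  rw [key]

private lemma mu_eq (m : ℕ) (hm : 0 < m) (t : VecZ m) (σ : Equiv.Perm (Fin (2 * m)))
    (l : ℕ) (hl : l ≤ 2 * m) (j : Fin (2 * m)) :
    muD m t σ (l : ℤ) j = t j + (if ((σ⁻¹ j : Fin (2 * m)) : ℕ) < l then -1 else 0)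
      - (if (j : ℕ) < l then -1 else 0) := by
  unfold muD
  rw [omegaA m hm l hl (σ⁻¹ j), omegaA m hm l hl j]

private lemma u_eq (m : ℕ) (hm : 0 < m) (t : VecZ m) (σ : Equiv.Perm (Fin (2 * m)))
    (j : Fin (2 * m)) (uj : ℤ)
    (hu : IsGreatest {x : ℤ | ∃ l : ℕ, l ≤ 2 * m ∧ x = muD m t σ (l : ℤ) j} uj) :
    uj = t j + (if (j : ℕ) < ((σ⁻¹ j : Fin (2 * m)) : ℕ) then 1 else 0) := by
  obtain ⟨⟨l, hl, hul⟩, hub⟩ := hu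
  have hs2 := (σ⁻¹ j).isLt
  have hj2 := j.isLt
  have h1 : uj ≤ t j + (if (j : ℕ) < ((σ⁻¹ j : Fin (2 * m)) : ℕ) then 1 else 0) := by
    rw [hul, mu_eq m hm t σ l hl j]
    split_ifs <;> omega
  have h2 : t j + (if (j : ℕ) < ((σ⁻¹ j : Fin (2 * m)) : ℕ) then 1 else 0) ≤ uj := by
    split_ifs with hc
    · refine hub ⟨(j : ℕ) + 1, by omega, ?_⟩
      rw [mu_eq m hm t σ ((j : ℕ) + 1) (by omega) j]
      split_ifs <;> omega
    · refine hub ⟨0, by omega, ?_⟩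
      rw [mu_eq m hm t σ 0 (by omega) j]
      split_ifs <;> omega
  omega

private lemma hh_diff (m x k : ℕ) (hx : x < 2 * m) (hk1 : 1 ≤ k) (hkm : k ≤ m) :
    hh m x k - hh m x (k - 1) =
      if k = min (x + 1) (2 * m - x) then (if x < m then -1 else 1) else 0 := by
  simp only [hh]
  split_ifs <;> omega

private lemma half_cast_eq {a b : ℤ} : ((a : ℝ) / 2 = (b : ℝ) / 2) ↔ a = b := by
  constructor
  · intro h
    have h2 : (a : ℝ) = (b : ℝ) := by linarith
    exact_mod_cast h2
  · intro h; rw [h]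

set_option maxHeartbeats 1000000 in
private lemma case2_holds (m : ℕ) (hm : 2 ≤ m)
    (t : VecZ m) (σ : Equiv.Perm (Fin (2 * m))) (hσ : InSO m σ)
    (u : Fin (2 * m) → ℤ) (j : Fin (2 * m))
    (hu' : u j = t j + (if (j : ℕ) < ((σ⁻¹ j : Fin (2 * m)) : ℕ) then 1 else 0))
    (h2 : σ j = j.rev) : Case2 m t σ u j := by
  have hm0 : 0 < m := by omega
  have hj2 : (j : ℕ) < 2 * m := j.isLt
  have hs2 : ((σ⁻¹ j : Fin (2 * m)) : ℕ) < 2 * m := (σ⁻¹ j).isLt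
  have hstep : σ j.rev = j := by rw [hσ.2 j, h2, Fin.rev_rev]
  have hsinv : σ⁻¹ j = j.rev := by
    apply σ.injective
    rw [Equiv.Perm.coe_inv, Equiv.apply_symm_apply, hstep]
  have hsn : ((σ⁻¹ j : Fin (2 * m)) : ℕ) = 2 * m - ((j : ℕ) + 1) := by
    rw [hsinv, Fin.val_rev]
  refine ⟨h2, ?_, ?_⟩
  · ext x
    simp only [Set.mem_setOf_eq, Set.mem_insert_iff, Set.mem_singleton_iff]
    constructor
    · rintro ⟨k, hk, rfl⟩
      rw [nu_eq m hm0 t σ k hk j]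
      have hval : 2 * t j + hh m ((σ⁻¹ j : Fin (2 * m)) : ℕ) k - hh m ((j : ℕ)) k
            = 2 * u j ∨
          2 * t j + hh m ((σ⁻¹ j : Fin (2 * m)) : ℕ) k - hh m ((j : ℕ)) k
            = 2 * u j - 2 := by
        rw [hu']
        simp only [hh]
        split_ifs <;> omega
      rcases hval with h | h
      · left; rw [h]; push_cast; ring
      · right; rw [h]; push_cast; ring
    · by_cases hjm : (j : ℕ) < m
      · rintro (rfl | rfl)
        · refine ⟨m, le_rfl, ?_⟩
          rw [nu_eq m hm0 t σ m le_rfl j,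
            show 2 * t j + hh m ((σ⁻¹ j : Fin (2 * m)) : ℕ) m - hh m ((j : ℕ)) m
                = 2 * u j by rw [hu']; simp only [hh]; split_ifs <;> omega]
          push_cast; ring
        · refine ⟨0, by omega, ?_⟩
          rw [nu_eq m hm0 t σ 0 (by omega) j,
            show 2 * t j + hh m ((σ⁻¹ j : Fin (2 * m)) : ℕ) 0 - hh m ((j : ℕ)) 0
                = 2 * u j - 2 by rw [hu']; simp only [hh]; split_ifs <;> omega]
          push_cast; ring
      · rintro (rfl | rfl)
        · refine ⟨0, by omega, ?_⟩
          rw [nu_eq m hm0 t σ 0 (by omega) j,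
            show 2 * t j + hh m ((σ⁻¹ j : Fin (2 * m)) : ℕ) 0 - hh m ((j : ℕ)) 0
                = 2 * u j by rw [hu']; simp only [hh]; split_ifs <;> omega]
          push_cast; ring
        · refine ⟨m, le_rfl, ?_⟩
          rw [nu_eq m hm0 t σ m le_rfl j,
            show 2 * t j + hh m ((σ⁻¹ j : Fin (2 * m)) : ℕ) m - hh m ((j : ℕ)) m
                = 2 * u j - 2 by rw [hu']; simp only [hh]; split_ifs <;> omega]
          push_cast; ring
  · intro k hk1 hkm
    have e1 : ((k : ℤ) - 1) = (((k - 1 : ℕ)) : ℤ) := by omega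
    rw [e1, nu_eq m hm0 t σ k hkm j, nu_eq m hm0 t σ (k - 1) (by omega) j, ne_eq,
      half_cast_eq, Fin.val_rev]
    have hdS := hh_diff m ((σ⁻¹ j : Fin (2 * m)) : ℕ) k hs2 hk1 hkm
    have hdJ := hh_diff m ((j : ℕ)) k hj2 hk1 hkm
    split_ifs at hdS hdJ <;> omega

set_option maxHeartbeats 1000000 in
private lemma case3_min_val (m : ℕ) (hm : 2 ≤ m)
    (t : VecZ m) (σ : Equiv.Perm (Fin (2 * m)))
    (u : Fin (2 * m) → ℤ) (j : Fin (2 * m))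
    (hu' : u j = t j + (if (j : ℕ) < ((σ⁻¹ j : Fin (2 * m)) : ℕ) then 1 else 0))
    (hsnj : ((σ⁻¹ j : Fin (2 * m)) : ℕ) ≠ (j : ℕ))
    (hsrevn : ((σ⁻¹ j : Fin (2 * m)) : ℕ) ≠ 2 * m - ((j : ℕ) + 1)) :
    ∃ k : ℕ, k ≤ m ∧ nuD m t σ (k : ℤ) j = (u j : ℝ) - 1 / 2 := by
  have hm0 : 0 < m := by omega
  have hj2 : (j : ℕ) < 2 * m := j.isLt
  have hs2 : ((σ⁻¹ j : Fin (2 * m)) : ℕ) < 2 * m := (σ⁻¹ j).isLt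
  refine ⟨min (min ((j : ℕ) + 1) (2 * m - (j : ℕ)))
      (min (((σ⁻¹ j : Fin (2 * m)) : ℕ) + 1)
        (2 * m - ((σ⁻¹ j : Fin (2 * m)) : ℕ))), by omega, ?_⟩
  rw [nu_eq m hm0 t σ _ (by omega) j,
    show 2 * t j + hh m ((σ⁻¹ j : Fin (2 * m)) : ℕ)
          (min (min ((j : ℕ) + 1) (2 * m - (j : ℕ)))
            (min (((σ⁻¹ j : Fin (2 * m)) : ℕ) + 1)
              (2 * m - ((σ⁻¹ j : Fin (2 * m)) : ℕ))))
        - hh m ((j : ℕ))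
          (min (min ((j : ℕ) + 1) (2 * m - (j : ℕ)))
            (min (((σ⁻¹ j : Fin (2 * m)) : ℕ) + 1)
              (2 * m - ((σ⁻¹ j : Fin (2 * m)) : ℕ))))
        = 2 * u j - 1 by rw [hu']; simp only [hh]; split_ifs <;> omega]
  push_cast; ring

set_option maxHeartbeats 1000000 in
private lemma case3_jumps (m : ℕ) (hm : 2 ≤ m)
    (t : VecZ m) (σ : Equiv.Perm (Fin (2 * m))) (j : Fin (2 * m))
    (hsnj : ((σ⁻¹ j : Fin (2 * m)) : ℕ) ≠ (j : ℕ))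
    (hsrevn : ((σ⁻¹ j : Fin (2 * m)) : ℕ) ≠ 2 * m - ((j : ℕ) + 1)) :
    ∀ k : ℕ, 1 ≤ k → k ≤ m →
      (nuD m t σ (k : ℤ) j ≠ nuD m t σ ((k : ℤ) - 1) j ↔
        (k = min ((j : ℕ) + 1) ((j.rev : ℕ) + 1) ∨
          k = min (((σ⁻¹ j : Fin (2 * m)) : ℕ) + 1)
            ((((σ⁻¹ j).rev : Fin (2 * m)) : ℕ) + 1))) := by
  have hm0 : 0 < m := by omega
  have hj2 : (j : ℕ) < 2 * m := j.isLt
  have hs2 : ((σ⁻¹ j : Fin (2 * m)) : ℕ) < 2 * m := (σ⁻¹ j).isLt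
  intro k hk1 hkm
  have e1 : ((k : ℤ) - 1) = (((k - 1 : ℕ)) : ℤ) := by omega
  rw [e1, nu_eq m hm0 t σ k hkm j, nu_eq m hm0 t σ (k - 1) (by omega) j, ne_eq,
    half_cast_eq]
  simp only [Fin.val_rev]
  have hdS := hh_diff m ((σ⁻¹ j : Fin (2 * m)) : ℕ) k hs2 hk1 hkm
  have hdJ := hh_diff m ((j : ℕ)) k hj2 hk1 hkm
  split_ifs at hdS hdJ <;> omega

set_option maxHeartbeats 1000000 in
private lemma case3_jumpsize (m : ℕ) (hm : 2 ≤ m)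
    (t : VecZ m) (σ : Equiv.Perm (Fin (2 * m))) (j : Fin (2 * m))
    (hsnj : ((σ⁻¹ j : Fin (2 * m)) : ℕ) ≠ (j : ℕ))
    (hsrevn : ((σ⁻¹ j : Fin (2 * m)) : ℕ) ≠ 2 * m - ((j : ℕ) + 1)) :
    ∀ k : ℕ, 1 ≤ k → k ≤ m → nuD m t σ (k : ℤ) j ≠ nuD m t σ ((k : ℤ) - 1) j →
      |nuD m t σ (k : ℤ) j - nuD m t σ ((k : ℤ) - 1) j| = 1 / 2 := by
  have hm0 : 0 < m := by omega
  have hj2 : (j : ℕ) < 2 * m := j.isLt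
  have hs2 : ((σ⁻¹ j : Fin (2 * m)) : ℕ) < 2 * m := (σ⁻¹ j).isLt
  intro k hk1 hkm hne'
  have e1 : ((k : ℤ) - 1) = (((k - 1 : ℕ)) : ℤ) := by omega
  rw [e1, nu_eq m hm0 t σ k hkm j, nu_eq m hm0 t σ (k - 1) (by omega) j]
    at hne' ⊢
  have hAB : (2 * t j + hh m ((σ⁻¹ j : Fin (2 * m)) : ℕ) k - hh m ((j : ℕ)) k) ≠
      (2 * t j + hh m ((σ⁻¹ j : Fin (2 * m)) : ℕ) (k - 1) - hh m ((j : ℕ)) (k - 1)) :=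
    fun h => hne' (by rw [h])
  have hD : (2 * t j + hh m ((σ⁻¹ j : Fin (2 * m)) : ℕ) k - hh m ((j : ℕ)) k) -
        (2 * t j + hh m ((σ⁻¹ j : Fin (2 * m)) : ℕ) (k - 1) - hh m ((j : ℕ)) (k - 1))
          = 1 ∨
      (2 * t j + hh m ((σ⁻¹ j : Fin (2 * m)) : ℕ) k - hh m ((j : ℕ)) k) -
        (2 * t j + hh m ((σ⁻¹ j : Fin (2 * m)) : ℕ) (k - 1) - hh m ((j : ℕ)) (k - 1))
          = -1 := by
    have hdS := hh_diff m ((σ⁻¹ j : Fin (2 * m)) : ℕ) k hs2 hk1 hkm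
    have hdJ := hh_diff m ((j : ℕ)) k hj2 hk1 hkm
    split_ifs at hdS hdJ <;> omega
  rw [div_sub_div_same]
  rcases hD with h | h
  · rw [show ((2 * t j + hh m ((σ⁻¹ j : Fin (2 * m)) : ℕ) k - hh m ((j : ℕ)) k : ℤ) : ℝ)
        - ((2 * t j + hh m ((σ⁻¹ j : Fin (2 * m)) : ℕ) (k - 1)
          - hh m ((j : ℕ)) (k - 1) : ℤ) : ℝ) = 1 by exact_mod_cast h]
    norm_num
  · rw [show ((2 * t j + hh m ((σ⁻¹ j : Fin (2 * m)) : ℕ) k - hh m ((j : ℕ)) k : ℤ) : ℝ)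
        - ((2 * t j + hh m ((σ⁻¹ j : Fin (2 * m)) : ℕ) (k - 1)
          - hh m ((j : ℕ)) (k - 1) : ℤ) : ℝ) = -1 by exact_mod_cast h]
    norm_num

theorem statement13 (m : ℕ) (hm : 2 ≤ m)
    (t : VecZ m) (σ : Equiv.Perm (Fin (2 * m))) (ht : InXD m t) (hσ : InSO m σ)
    (u : Fin (2 * m) → ℤ)
    (hu : ∀ j, IsGreatest {x : ℤ | ∃ l : ℕ, l ≤ 2 * m ∧ x = muD m t σ (l : ℤ) j} (u j))
    (j : Fin (2 * m)) :
    (Case1 m t σ j ∧ ¬ Case2 m t σ u j ∧ ¬ Case3 m t σ u j) ∨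
    (¬ Case1 m t σ j ∧ Case2 m t σ u j ∧ ¬ Case3 m t σ u j) ∨
    (¬ Case1 m t σ j ∧ ¬ Case2 m t σ u j ∧ Case3 m t σ u j) := by
  have hm0 : 0 < m := by omega
  have hj2 : (j : ℕ) < 2 * m := j.isLt
  have hs2 : ((σ⁻¹ j : Fin (2 * m)) : ℕ) < 2 * m := (σ⁻¹ j).isLt
  have hrevj : j.rev ≠ j := by
    intro h
    have h' := congrArg Fin.val h
    rw [Fin.val_rev] at h'
    omega
  have hu' := u_eq m hm0 t σ j (u j) (hu j)
  by_cases h1 : σ j = j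
  · left
    refine ⟨⟨h1, ?_⟩, fun hc => hrevj ((h1.symm.trans hc.1).symm), fun hc => hc.1 h1⟩
    intro k k' hk hk'
    have hs : σ⁻¹ j = j := by
      apply σ.injective
      rw [Equiv.Perm.coe_inv, Equiv.apply_symm_apply, h1]
    rw [nu_eq m hm0 t σ k hk j, nu_eq m hm0 t σ k' hk' j, hs]
    push_cast
    ring
  · by_cases h2 : σ j = j.rev
    · right; left
      exact ⟨fun hc => h1 hc.1, case2_holds m hm t σ hσ u j hu' h2,
        fun hc => hc.2.1 h2⟩
    · right; right
      have hsj : σ⁻¹ j ≠ j := by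
        intro h
        have h' := congrArg σ h
        rw [Equiv.Perm.coe_inv, Equiv.apply_symm_apply] at h'
        exact h1 h'.symm
      have hsrev : σ⁻¹ j ≠ j.rev := by
        intro h
        have h' := congrArg σ h
        rw [Equiv.Perm.coe_inv, Equiv.apply_symm_apply, hσ.2 j] at h'
        have h'' := congrArg Fin.rev h'
        rw [Fin.rev_rev] at h''
        exact h2 h''.symm
      have hsnj : ((σ⁻¹ j : Fin (2 * m)) : ℕ) ≠ (j : ℕ) := fun h => hsj (Fin.ext h)
      have hsrevn : ((σ⁻¹ j : Fin (2 * m)) : ℕ) ≠ 2 * m - ((j : ℕ) + 1) := by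
        intro h
        exact hsrev (Fin.ext (by rw [h, Fin.val_rev]))
      refine ⟨fun hc => h1 hc.1, fun hc => h2 hc.1, h1, h2,
        case3_min_val m hm t σ u j hu' hsnj hsrevn, ?_,
        case3_jumps m hm t σ j hsnj hsrevn,
        case3_jumpsize m hm t σ j hsnj hsrevn⟩
      simp only [Fin.val_rev]
      omega

end TypeD
end

section
/- Let w ∈ W̃_{D_m}, let α̃ := α̃_{i,j;d} be an affine root (so j ∉ {i, i*}, d ∈ ℤ), let 0 ≤ k ≤ m, and suppose that w and s_{α̃}w both satisfy (SP1) at k. (i) If ν_k^w(i), ν_k^w(j), and ⟨α̃, a_k⟩ are all integers, then c_k^{s_{α̃}w} ∈ {c_k^w − 2, c_k^w, c_k^w + 2}. (ii) If at least one of ν_k^w(i), ν_k^w(j), ⟨α̃, a_k⟩ is a half-integer (an element of (1/2)ℤ ∖ ℤ), then c_k^{s_{α̃}w} ∈ {c_k^w − 1, c_k^w, c_k^w + 1}. -/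
open Finset

namespace TypeD

private lemma isIntVal_div_two (z : ℤ) : IsIntVal ((z:ℝ)/2) ↔ Even z := by
  constructor
  · rintro ⟨w, hw⟩
    have h : (z:ℝ) = 2*w := by linarith
    have h2 : z = 2*w := by exact_mod_cast h
    exact ⟨w, by omega⟩
  · rintro ⟨w, hw⟩
    exact ⟨w, by rw [hw]; push_cast; ring⟩

private lemma isHalfInt_div_two (z : ℤ) : IsHalfInt ((z:ℝ)/2) ↔ Odd z := by
  unfold IsHalfInt
  rw [isIntVal_div_two, Int.not_even_iff_odd]
  exact ⟨fun h => h.2, fun h => ⟨⟨z, rfl⟩, h⟩⟩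

private lemma omegaD_eval (m : ℕ) (k : ℕ) (hm : 1 ≤ m) (hk : k ≤ m) (l : Fin (2*m)) :
    omegaD m (k:ℤ) l = if (l:ℕ) < k then -1 else 0 := by
  have h1 : (k:ℤ) % (2*(m:ℤ)) = k := Int.emod_eq_of_lt (by positivity) (by push_cast; omega)
  have h2 : (k:ℤ) / (2*(m:ℤ)) = 0 := by
    apply Int.ediv_eq_zero_of_lt <;> omega
  unfold omegaD
  rw [h1, h2]
  have := l.isLt
  split_ifs with hA hB hB <;> first | rfl | omega

private lemma aD_eq (m : ℕ) (k : ℕ) (hm : 1 ≤ m) (hk : k ≤ m) (l : Fin (2*m)) :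
    aD m k l = ((omegaD m (k:ℤ) l - omegaD m (k:ℤ) l.rev : ℤ) : ℝ) / 2 := by
  rw [omegaD_eval m k hm hk, omegaD_eval m k hm hk]
  have hl := l.isLt
  have hrev : (l.rev : ℕ) = 2*m - (l+1) := Fin.val_rev l
  unfold aD
  split_ifs with h1 h2 h3 h3 <;> first | (exfalso; omega) | norm_num

private lemma indicator_exists (x : ℤ) :
    ∃ e : ℤ, ((x = 2 ∧ e = 1) ∨ (x ≠ 2 ∧ e = 0)) ∧ (if x = 2 then (1:ℤ) else 0) = e := by
  by_cases h : x = 2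
  · exact ⟨1, Or.inl ⟨h, rfl⟩, by simp [h]⟩
  · exact ⟨0, Or.inr ⟨h, rfl⟩, by simp [h]⟩


set_option maxHeartbeats 4000000 in
private lemma core_even {a b c e n n' A d ci co e1 e2 e3 e4 e5 e6 e7 e8 : ℤ}
    (hd : ci - co = (e1 - e2) + (e3 - e4) + (e5 - e6) + (e7 - e8))
    (he1 : (a - n = 2 ∧ e1 = 1) ∨ (a - n ≠ 2 ∧ e1 = 0))
    (he2 : (a = 2 ∧ e2 = 1) ∨ (a ≠ 2 ∧ e2 = 0))
    (he3 : (b + n = 2 ∧ e3 = 1) ∨ (b + n ≠ 2 ∧ e3 = 0))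
    (he4 : (b = 2 ∧ e4 = 1) ∨ (b ≠ 2 ∧ e4 = 0))
    (he5 : (c + n' = 2 ∧ e5 = 1) ∨ (c + n' ≠ 2 ∧ e5 = 0))
    (he6 : (c = 2 ∧ e6 = 1) ∨ (c ≠ 2 ∧ e6 = 0))
    (he7 : (e - n' = 2 ∧ e7 = 1) ∨ (e - n' ≠ 2 ∧ e7 = 0))
    (he8 : (e = 2 ∧ e8 = 1) ∨ (e ≠ 2 ∧ e8 = 0))
    (hba : 0 ≤ a ∧ a ≤ 2) (hbb : 0 ≤ b ∧ b ≤ 2) (hbc : 0 ≤ c ∧ c ≤ 2) (hbe : 0 ≤ e ∧ e ≤ 2)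
    (hba' : 0 ≤ a - n ∧ a - n ≤ 2) (hbb' : 0 ≤ b + n ∧ b + n ≤ 2)
    (hbc' : 0 ≤ c + n' ∧ c + n' ≤ 2) (hbe' : 0 ≤ e - n' ∧ e - n' ≤ 2)
    (hnn : n + n' = a - b + e - c + A - 2*d)
    {w1 w2 w3 : ℤ}
    (hw1 : a + (2 - c) = w1 + w1) (hw2 : b + (2 - e) = w2 + w2)
    (hw3 : A - 2*d = w3 + w3) :
    ci = co - 2 ∨ ci = co ∨ ci = co + 2 := by omega

set_option maxHeartbeats 4000000 in
private lemma core_odd1 {a b c e n n' A d ci co e1 e2 e3 e4 e5 e6 e7 e8 : ℤ}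
    (hd : ci - co = (e1 - e2) + (e3 - e4) + (e5 - e6) + (e7 - e8))
    (he1 : (a - n = 2 ∧ e1 = 1) ∨ (a - n ≠ 2 ∧ e1 = 0))
    (he2 : (a = 2 ∧ e2 = 1) ∨ (a ≠ 2 ∧ e2 = 0))
    (he3 : (b + n = 2 ∧ e3 = 1) ∨ (b + n ≠ 2 ∧ e3 = 0))
    (he4 : (b = 2 ∧ e4 = 1) ∨ (b ≠ 2 ∧ e4 = 0))
    (he5 : (c + n' = 2 ∧ e5 = 1) ∨ (c + n' ≠ 2 ∧ e5 = 0))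
    (he6 : (c = 2 ∧ e6 = 1) ∨ (c ≠ 2 ∧ e6 = 0))
    (he7 : (e - n' = 2 ∧ e7 = 1) ∨ (e - n' ≠ 2 ∧ e7 = 0))
    (he8 : (e = 2 ∧ e8 = 1) ∨ (e ≠ 2 ∧ e8 = 0))
    (hba : 0 ≤ a ∧ a ≤ 2) (hbb : 0 ≤ b ∧ b ≤ 2) (hbc : 0 ≤ c ∧ c ≤ 2) (hbe : 0 ≤ e ∧ e ≤ 2)
    (hba' : 0 ≤ a - n ∧ a - n ≤ 2) (hbb' : 0 ≤ b + n ∧ b + n ≤ 2)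
    (hbc' : 0 ≤ c + n' ∧ c + n' ≤ 2) (hbe' : 0 ≤ e - n' ∧ e - n' ≤ 2)
    (hnn : n + n' = a - b + e - c + A - 2*d)
    {w1 : ℤ} (hw1 : a + (2 - c) = 2 * w1 + 1) :
    ci = co - 1 ∨ ci = co ∨ ci = co + 1 := by omega

set_option maxHeartbeats 4000000 in
private lemma core_odd2 {a b c e n n' A d ci co e1 e2 e3 e4 e5 e6 e7 e8 : ℤ}
    (hd : ci - co = (e1 - e2) + (e3 - e4) + (e5 - e6) + (e7 - e8))
    (he1 : (a - n = 2 ∧ e1 = 1) ∨ (a - n ≠ 2 ∧ e1 = 0))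
    (he2 : (a = 2 ∧ e2 = 1) ∨ (a ≠ 2 ∧ e2 = 0))
    (he3 : (b + n = 2 ∧ e3 = 1) ∨ (b + n ≠ 2 ∧ e3 = 0))
    (he4 : (b = 2 ∧ e4 = 1) ∨ (b ≠ 2 ∧ e4 = 0))
    (he5 : (c + n' = 2 ∧ e5 = 1) ∨ (c + n' ≠ 2 ∧ e5 = 0))
    (he6 : (c = 2 ∧ e6 = 1) ∨ (c ≠ 2 ∧ e6 = 0))
    (he7 : (e - n' = 2 ∧ e7 = 1) ∨ (e - n' ≠ 2 ∧ e7 = 0))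
    (he8 : (e = 2 ∧ e8 = 1) ∨ (e ≠ 2 ∧ e8 = 0))
    (hba : 0 ≤ a ∧ a ≤ 2) (hbb : 0 ≤ b ∧ b ≤ 2) (hbc : 0 ≤ c ∧ c ≤ 2) (hbe : 0 ≤ e ∧ e ≤ 2)
    (hba' : 0 ≤ a - n ∧ a - n ≤ 2) (hbb' : 0 ≤ b + n ∧ b + n ≤ 2)
    (hbc' : 0 ≤ c + n' ∧ c + n' ≤ 2) (hbe' : 0 ≤ e - n' ∧ e - n' ≤ 2)
    (hnn : n + n' = a - b + e - c + A - 2*d)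
    {w1 : ℤ} (hw1 : b + (2 - e) = 2 * w1 + 1) :
    ci = co - 1 ∨ ci = co ∨ ci = co + 1 := by omega

set_option maxHeartbeats 4000000 in
private lemma core_odd3 {a b c e n n' A d ci co e1 e2 e3 e4 e5 e6 e7 e8 : ℤ}
    (hd : ci - co = (e1 - e2) + (e3 - e4) + (e5 - e6) + (e7 - e8))
    (he1 : (a - n = 2 ∧ e1 = 1) ∨ (a - n ≠ 2 ∧ e1 = 0))
    (he2 : (a = 2 ∧ e2 = 1) ∨ (a ≠ 2 ∧ e2 = 0))
    (he3 : (b + n = 2 ∧ e3 = 1) ∨ (b + n ≠ 2 ∧ e3 = 0))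
    (he4 : (b = 2 ∧ e4 = 1) ∨ (b ≠ 2 ∧ e4 = 0))
    (he5 : (c + n' = 2 ∧ e5 = 1) ∨ (c + n' ≠ 2 ∧ e5 = 0))
    (he6 : (c = 2 ∧ e6 = 1) ∨ (c ≠ 2 ∧ e6 = 0))
    (he7 : (e - n' = 2 ∧ e7 = 1) ∨ (e - n' ≠ 2 ∧ e7 = 0))
    (he8 : (e = 2 ∧ e8 = 1) ∨ (e ≠ 2 ∧ e8 = 0))
    (hba : 0 ≤ a ∧ a ≤ 2) (hbb : 0 ≤ b ∧ b ≤ 2) (hbc : 0 ≤ c ∧ c ≤ 2) (hbe : 0 ≤ e ∧ e ≤ 2)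
    (hba' : 0 ≤ a - n ∧ a - n ≤ 2) (hbb' : 0 ≤ b + n ∧ b + n ≤ 2)
    (hbc' : 0 ≤ c + n' ∧ c + n' ≤ 2) (hbe' : 0 ≤ e - n' ∧ e - n' ≤ 2)
    (hnn : n + n' = a - b + e - c + A - 2*d)
    {w1 : ℤ} (hw1 : A - 2*d = 2 * w1 + 1) :
    ci = co - 1 ∨ ci = co ∨ ci = co + 1 := by omega

theorem statement14 (m : ℕ) (hm : 2 ≤ m)
    (t : VecZ m) (σ : Equiv.Perm (Fin (2 * m))) (ht : InXD m t) (hσ : InSO m σ)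
    (i j : Fin (2 * m)) (hji : j ≠ i) (hjir : j ≠ i.rev) (d : ℤ)
    (t' : VecZ m) (σ' : Equiv.Perm (Fin (2 * m))) (ht' : InXD m t') (hσ' : InSO m σ')
    (hrefl : IsReflOf m i j d t σ t' σ')
    (k : ℕ) (hk : k ≤ m)
    (h1 : SP1 m t σ (k : ℤ)) (h1' : SP1 m t' σ' (k : ℤ)) :
    ((IsIntVal (nuD m t σ (k : ℤ) i) ∧ IsIntVal (nuD m t σ (k : ℤ) j) ∧
        IsIntVal (aD m k i - aD m k j - (d : ℝ))) →
      ((cD m t' σ' (k : ℤ) : ℤ) = (cD m t σ (k : ℤ) : ℤ) - 2 ∨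
        (cD m t' σ' (k : ℤ) : ℤ) = (cD m t σ (k : ℤ) : ℤ) ∨
        (cD m t' σ' (k : ℤ) : ℤ) = (cD m t σ (k : ℤ) : ℤ) + 2)) ∧
    ((IsHalfInt (nuD m t σ (k : ℤ) i) ∨ IsHalfInt (nuD m t σ (k : ℤ) j) ∨
        IsHalfInt (aD m k i - aD m k j - (d : ℝ))) →
      ((cD m t' σ' (k : ℤ) : ℤ) = (cD m t σ (k : ℤ) : ℤ) - 1 ∨
        (cD m t' σ' (k : ℤ) : ℤ) = (cD m t σ (k : ℤ) : ℤ) ∨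
        (cD m t' σ' (k : ℤ) : ℤ) = (cD m t σ (k : ℤ) : ℤ) + 1)) := by
  classical
  -- basic facts about rev
  have hrr : ∀ l : Fin (2*m), l.rev.rev = l := fun l => Fin.rev_rev l
  have hrevne : ∀ l : Fin (2*m), l.rev ≠ l := by
    intro l h
    have h1 : (l.rev : ℕ) = 2*m - (l+1) := Fin.val_rev l
    have h2 := l.isLt
    rw [h] at h1; omega
  have hrevinj : ∀ l l' : Fin (2*m), l.rev = l'.rev → l = l' :=
    fun l l' h => Fin.rev_injective h
  have hner : ∀ a b : Fin (2*m), a ≠ b → a.rev ≠ b.rev :=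
    fun a b h hh => h (hrevinj _ _ hh)
  -- pairwise distinctness of i, j, i.rev, j.rev
  have hij : i ≠ j := Ne.symm hji
  have hiir : i ≠ i.rev := fun h => hrevne i h.symm
  have hjjr : j ≠ j.rev := fun h => hrevne j h.symm
  have hijr : i ≠ j.rev := fun h => hjir (by rw [h, hrr])
  have hirj : i.rev ≠ j := fun h => hjir h.symm
  have hjri : j.rev ≠ i := fun h => hijr h.symm
  have hirjr : i.rev ≠ j.rev := hner _ _ hij
  have hjrir : j.rev ≠ i.rev := hner _ _ hji
  have hiri : i.rev ≠ i := hrevne i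
  have hjrj : j.rev ≠ j := hrevne j
  -- σ⁻¹ commutes with rev
  have hsrev : ∀ l, σ⁻¹ l.rev = (σ⁻¹ l).rev := by
    intro l
    rw [Equiv.Perm.inv_eq_iff_eq, hσ.2, ← Equiv.Perm.mul_apply, mul_inv_cancel, Equiv.Perm.one_apply]
  have hsne : ∀ a b : Fin (2*m), a ≠ b → σ⁻¹ a ≠ σ⁻¹ b :=
    fun a b h hh => h (σ⁻¹.injective hh)
  -- coroot values
  have hcor_i : corootD m i j i = 1 := by simp [corootD, hij, hijr, hiir]
  have hcor_j : corootD m i j j = -1 := by simp [corootD, hji, hjjr, hjir]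
  have hcor_ir : corootD m i j i.rev = -1 := by simp [corootD, hiri, hirj, hirjr]
  have hcor_jr : corootD m i j j.rev = 1 := by simp [corootD, hjri, hjrj, hjrir]
  have hcor_o : ∀ l, l ≠ i → l ≠ j → l ≠ i.rev → l ≠ j.rev → corootD m i j l = 0 := by
    intro l h1 h2 h3 h4; simp [corootD, h1, h2, h3, h4]
  -- translation part of the reflection
  have hzero_ap : InApartR m (fun _ => (0:ℝ)) := by intro c c'; simp
  have ht'f : ∀ l, t' l = t l - (t i - t j - d) * corootD m i j l := by
    intro l
    have h := hrefl (fun _ => 0) hzero_ap l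
    simp only [actR] at h
    have h2 : ((t' l : ℝ)) = ((t l - (t i - t j - d) * corootD m i j l : ℤ) : ℝ) := by
      push_cast; linarith
    exact_mod_cast h2
  -- linear relation for points of the apartment
  have hxrel : ∀ x : VecR m, InApartR m x → ∀ l,
      x (σ'⁻¹ l) = x (σ⁻¹ l) - (x (σ⁻¹ i) - x (σ⁻¹ j)) * (corootD m i j l : ℝ) := by
    intro x hx l
    have h := hrefl x hx l
    simp only [actR] at h
    have ht'l : ((t' l : ℝ)) = (t l : ℝ) - ((t i :ℝ) - t j - d) * (corootD m i j l : ℝ) := by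
      rw [ht'f l]; push_cast; ring
    rw [ht'l] at h
    linear_combination h
  -- test vectors
  set xv : Fin (2*m) → VecR m :=
    fun aa c => if c = aa then (1:ℝ) else if c = aa.rev then -1 else 0 with hxvdef
  have hxv_at : ∀ aa, xv aa aa = 1 := fun aa => by simp [hxvdef]
  have hxv_atr : ∀ aa, xv aa aa.rev = -1 := fun aa => by simp [hxvdef, hrevne aa]
  have hxv_o : ∀ aa b, b ≠ aa → b ≠ aa.rev → xv aa b = 0 := by
    intro aa b h1 h2; simp [hxvdef, h1, h2]
  have hxv_ap : ∀ aa, InApartR m (xv aa) := by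
    intro aa
    have hz : ∀ b : Fin (2*m), xv aa b + xv aa b.rev = 0 := by
      intro b
      by_cases hb1 : b = aa
      · subst hb1
        rw [hxv_at, hxv_atr]; ring
      · by_cases hb2 : b = aa.rev
        · subst hb2
          rw [hrr, hxv_atr, hxv_at]; ring
        · have hb3 : b.rev ≠ aa := fun h => hb2 (by rw [← h, hrr])
          have hb4 : b.rev ≠ aa.rev := hner _ _ hb1
          rw [hxv_o aa b hb1 hb2, hxv_o aa b.rev hb3 hb4]; ring
    intro c c'
    rw [hz c, hz c']
  have hxv_one : ∀ aa b, xv aa b = 1 → b = aa := by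
    intro aa b h
    by_cases h1 : b = aa
    · exact h1
    · exfalso
      by_cases h2 : b = aa.rev
      · rw [h2, hxv_atr] at h; norm_num at h
      · rw [hxv_o aa b h1 h2] at h; norm_num at h
  -- the permutation part of the reflection
  have hs'i : σ'⁻¹ i = σ⁻¹ j := by
    apply hxv_one (σ⁻¹ j)
    have h := hxrel (xv (σ⁻¹ j)) (hxv_ap _) i
    rw [hcor_i, hxv_at] at h
    rw [h]; push_cast; ring
  have hs'j : σ'⁻¹ j = σ⁻¹ i := by
    apply hxv_one (σ⁻¹ i)
    have h := hxrel (xv (σ⁻¹ i)) (hxv_ap _) j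
    rw [hcor_j, hxv_at] at h
    rw [h]; push_cast; ring
  have hs'ir : σ'⁻¹ i.rev = (σ⁻¹ j).rev := by
    apply hxv_one ((σ⁻¹ j).rev)
    have h := hxrel (xv ((σ⁻¹ j).rev)) (hxv_ap _) i.rev
    rw [hcor_ir] at h
    have v1 : xv ((σ⁻¹ j).rev) (σ⁻¹ i.rev) = 0 := by
      rw [hsrev i]
      refine hxv_o _ _ (hner _ _ (hsne _ _ hij)) ?_
      rw [hrr]
      intro hh
      exact hirj (σ⁻¹.injective (by rw [hsrev i]; exact hh))
    have v2 : xv ((σ⁻¹ j).rev) (σ⁻¹ i) = 0 := by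
      refine hxv_o _ _ ?_ ?_
      · rw [← hsrev]; exact hsne _ _ hijr
      · rw [hrr]; exact hsne _ _ hij
    have v3 : xv ((σ⁻¹ j).rev) (σ⁻¹ j) = -1 := by
      have h' := hxv_atr ((σ⁻¹ j).rev)
      rwa [hrr] at h'
    rw [v1, v2, v3] at h
    rw [h]; push_cast; ring
  have hs'jr : σ'⁻¹ j.rev = (σ⁻¹ i).rev := by
    apply hxv_one ((σ⁻¹ i).rev)
    have h := hxrel (xv ((σ⁻¹ i).rev)) (hxv_ap _) j.rev
    rw [hcor_jr] at h
    have v1 : xv ((σ⁻¹ i).rev) (σ⁻¹ j.rev) = 0 := by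
      rw [hsrev j]
      refine hxv_o _ _ (hner _ _ (hsne _ _ hji)) ?_
      rw [hrr]
      intro hh
      exact hjri (σ⁻¹.injective (by rw [hsrev j]; exact hh))
    have v2 : xv ((σ⁻¹ i).rev) (σ⁻¹ i) = -1 := by
      have h' := hxv_atr ((σ⁻¹ i).rev)
      rwa [hrr] at h'
    have v3 : xv ((σ⁻¹ i).rev) (σ⁻¹ j) = 0 := by
      refine hxv_o _ _ ?_ ?_
      · rw [← hsrev]; exact hsne _ _ hjir
      · rw [hrr]; exact hsne _ _ hji
    rw [v1, v2, v3] at h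
    rw [h]; push_cast; ring
  have hs'o : ∀ l, l ≠ i → l ≠ j → l ≠ i.rev → l ≠ j.rev → σ'⁻¹ l = σ⁻¹ l := by
    intro l h1 h2 h3 h4
    apply hxv_one (σ⁻¹ l)
    have h := hxrel (xv (σ⁻¹ l)) (hxv_ap _) l
    rw [hcor_o l h1 h2 h3 h4, hxv_at] at h
    rw [h]; push_cast; ring
  -- the shift amounts
  set n : ℤ := (t i - t j - d) + omegaD m (k:ℤ) (σ⁻¹ i) - omegaD m (k:ℤ) (σ⁻¹ j) with hn
  set n' : ℤ := (t i - t j - d) + omegaD m (k:ℤ) ((σ⁻¹ j).rev)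
      - omegaD m (k:ℤ) ((σ⁻¹ i).rev) with hn'
  -- the transformation of μ at the four special coordinates
  have hmu'i : muD m t' σ' (k:ℤ) i = muD m t σ (k:ℤ) i - n := by
    simp only [muD, ht'f i, hcor_i, hs'i, hn]; ring
  have hmu'j : muD m t' σ' (k:ℤ) j = muD m t σ (k:ℤ) j + n := by
    simp only [muD, ht'f j, hcor_j, hs'j, hn]; ring
  have hmu'ir : muD m t' σ' (k:ℤ) i.rev = muD m t σ (k:ℤ) i.rev + n' := by
    simp only [muD, ht'f i.rev, hcor_ir, hs'ir, hn', hsrev i]; ring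
  have hmu'jr : muD m t' σ' (k:ℤ) j.rev = muD m t σ (k:ℤ) j.rev - n' := by
    simp only [muD, ht'f j.rev, hcor_jr, hs'jr, hn', hsrev j]; ring
  have hmu'o : ∀ l, l ≠ i → l ≠ j → l ≠ i.rev → l ≠ j.rev →
      muD m t' σ' (k:ℤ) l = muD m t σ (k:ℤ) l := by
    intro l h1 h2 h3 h4
    simp only [muD, ht'f l, hcor_o l h1 h2 h3 h4, hs'o l h1 h2 h3 h4]; ring
  -- card as a sum
  have hcardZ : ∀ (tt : VecZ m) (σσ : Equiv.Perm (Fin (2*m))),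
      (cD m tt σσ (k:ℤ) : ℤ) = ∑ l, (if muD m tt σσ (k:ℤ) l = 2 then (1:ℤ) else 0) := by
    intro tt σσ
    rw [cD, Set.ncard_eq_toFinset_card', Set.toFinset_setOf, Finset.card_filter]
    push_cast
    rfl
  -- difference of the counts
  have hvanish : ∀ l ∈ (Finset.univ : Finset (Fin (2*m))),
      l ∉ ({i, j, i.rev, j.rev} : Finset (Fin (2*m))) →
      ((if muD m t' σ' (k:ℤ) l = 2 then (1:ℤ) else 0)
        - (if muD m t σ (k:ℤ) l = 2 then 1 else 0)) = 0 := by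
    intro l _ hnot
    simp only [Finset.mem_insert, Finset.mem_singleton] at hnot
    push_neg at hnot
    rw [hmu'o l hnot.1 hnot.2.1 hnot.2.2.1 hnot.2.2.2]
    ring
  have hdiff : (cD m t' σ' (k:ℤ) : ℤ) - (cD m t σ (k:ℤ) : ℤ) =
      ((if muD m t σ (k:ℤ) i - n = 2 then (1:ℤ) else 0)
        - (if muD m t σ (k:ℤ) i = 2 then 1 else 0)) +
      ((if muD m t σ (k:ℤ) j + n = 2 then (1:ℤ) else 0)
        - (if muD m t σ (k:ℤ) j = 2 then 1 else 0)) +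
      ((if muD m t σ (k:ℤ) i.rev + n' = 2 then (1:ℤ) else 0)
        - (if muD m t σ (k:ℤ) i.rev = 2 then 1 else 0)) +
      ((if muD m t σ (k:ℤ) j.rev - n' = 2 then (1:ℤ) else 0)
        - (if muD m t σ (k:ℤ) j.rev = 2 then 1 else 0)) := by
    rw [hcardZ t' σ', hcardZ t σ, ← Finset.sum_sub_distrib,
      ← Finset.sum_subset (Finset.subset_univ ({i, j, i.rev, j.rev} : Finset (Fin (2*m)))) hvanish]
    rw [show ({i, j, i.rev, j.rev} : Finset (Fin (2*m)))
        = insert i (insert j (insert i.rev {j.rev})) from rfl]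
    rw [Finset.sum_insert (by simp [hij, hiir, hijr]),
      Finset.sum_insert (by simp [hjir, hjjr]),
      Finset.sum_insert (by simp [hirjr]), Finset.sum_singleton]
    rw [hmu'i, hmu'j, hmu'ir, hmu'jr]
    ring
  -- SP1 data
  have hdual_i : muD m t σ (-(k:ℤ)) i = 2 - muD m t σ (k:ℤ) i.rev := by
    have h := h1.1 i.rev; rw [hrr] at h; omega
  have hdual_j : muD m t σ (-(k:ℤ)) j = 2 - muD m t σ (k:ℤ) j.rev := by
    have h := h1.1 j.rev; rw [hrr] at h; omega
  have hb1 := h1.2 i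
  have hb2 := h1.2 j
  have hb3 := h1.2 i.rev
  have hb4 := h1.2 j.rev
  have hb1' := h1'.2 i
  have hb2' := h1'.2 j
  have hb3' := h1'.2 i.rev
  have hb4' := h1'.2 j.rev
  rw [hmu'i] at hb1'
  rw [hmu'j] at hb2'
  rw [hmu'ir] at hb3'
  rw [hmu'jr] at hb4'
  -- the n + n' identity
  have htij := ht i j
  have hnn : n + n' = muD m t σ (k:ℤ) i - muD m t σ (k:ℤ) j + muD m t σ (k:ℤ) j.rev
      - muD m t σ (k:ℤ) i.rev
      + (omegaD m (k:ℤ) i - omegaD m (k:ℤ) i.rev - omegaD m (k:ℤ) j + omegaD m (k:ℤ) j.rev)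
      - 2*d := by
    rw [hn, hn']
    simp only [muD, hsrev i, hsrev j]
    omega
  -- ν values
  have hnu_i : nuD m t σ (k:ℤ) i
      = (((muD m t σ (k:ℤ) i + (2 - muD m t σ (k:ℤ) i.rev) : ℤ)) : ℝ)/2 := by
    rw [nuD, hdual_i]
  have hnu_j : nuD m t σ (k:ℤ) j
      = (((muD m t σ (k:ℤ) j + (2 - muD m t σ (k:ℤ) j.rev) : ℤ)) : ℝ)/2 := by
    rw [nuD, hdual_j]
  have haid : aD m k i - aD m k j - (d:ℝ)
      = (((omegaD m (k:ℤ) i - omegaD m (k:ℤ) i.rev - omegaD m (k:ℤ) j + omegaD m (k:ℤ) j.rev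
          - 2*d : ℤ)) : ℝ)/2 := by
    rw [aD_eq m k (by omega) hk i, aD_eq m k (by omega) hk j]
    push_cast; ring
  -- indicator variables
  obtain ⟨e1, he1, hr1⟩ := indicator_exists (muD m t σ (k:ℤ) i - n)
  obtain ⟨e2, he2, hr2⟩ := indicator_exists (muD m t σ (k:ℤ) i)
  obtain ⟨e3, he3, hr3⟩ := indicator_exists (muD m t σ (k:ℤ) j + n)
  obtain ⟨e4, he4, hr4⟩ := indicator_exists (muD m t σ (k:ℤ) j)
  obtain ⟨e5, he5, hr5⟩ := indicator_exists (muD m t σ (k:ℤ) i.rev + n')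
  obtain ⟨e6, he6, hr6⟩ := indicator_exists (muD m t σ (k:ℤ) i.rev)
  obtain ⟨e7, he7, hr7⟩ := indicator_exists (muD m t σ (k:ℤ) j.rev - n')
  obtain ⟨e8, he8, hr8⟩ := indicator_exists (muD m t σ (k:ℤ) j.rev)
  rw [hr1, hr2, hr3, hr4, hr5, hr6, hr7, hr8] at hdiff
  have hdiff' : (cD m t' σ' (k:ℤ) : ℤ) - (cD m t σ (k:ℤ) : ℤ)
      = (e1 - e2) + (e3 - e4) + (e5 - e6) + (e7 - e8) := by
    rw [hdiff]
  constructor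
  · rintro ⟨hI1, hI2, hI3⟩
    rw [hnu_i, isIntVal_div_two] at hI1
    rw [hnu_j, isIntVal_div_two] at hI2
    rw [haid, isIntVal_div_two] at hI3
    rcases hI1 with ⟨w1, hw1⟩
    rcases hI2 with ⟨w2, hw2⟩
    rcases hI3 with ⟨w3, hw3⟩
    exact core_even hdiff' he1 he2 he3 he4 he5 he6 he7 he8 hb1 hb2 hb3 hb4
      hb1' hb2' hb3' hb4' hnn hw1 hw2 hw3
  · rintro (hH | hH | hH)
    · rw [hnu_i, isHalfInt_div_two] at hH
      rcases hH with ⟨w1, hw1⟩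
      exact core_odd1 hdiff' he1 he2 he3 he4 he5 he6 he7 he8 hb1 hb2 hb3 hb4
        hb1' hb2' hb3' hb4' hnn hw1
    · rw [hnu_j, isHalfInt_div_two] at hH
      rcases hH with ⟨w1, hw1⟩
      exact core_odd2 hdiff' he1 he2 he3 he4 he5 he6 he7 he8 hb1 hb2 hb3 hb4
        hb1' hb2' hb3' hb4' hnn hw1
    · rw [haid, isHalfInt_div_two] at hH
      rcases hH with ⟨w1, hw1⟩
      exact core_odd3 hdiff' he1 he2 he3 he4 he5 he6 he7 he8 hb1 hb2 hb3 hb4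
        hb1' hb2' hb3' hb4' hnn hw1

end TypeD
end
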